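/- arXiv:2301.03176 — 7 statements merged into one kernel-verified Lean document; each statement's English description precedes it below -/
import Mathlib

section
/- For every real λ, every real y with |λy| < 1, and every real x with x ≠ 1 and |λxy| < 1, one has (e_λ(xy) − e_λ(y))/(x − 1) = Σ_{n=0}^∞ T_n(y) x^n, where the series on the right converges. -/
noncomputable section

/-- Generalized falling factorial `(x)_{n,λ} = x(x-λ)⋯(x-(n-1)λ)`, with `(x)_{0,λ} = 1`. -/
def dff (lam x : ℝ) (n : ℕ) : ℝ := ∏ i ∈ Finset.range n, (x - i * lam)

/-- Degenerate exponential `e_λ(y) = ∑_{n=0}^∞ (1)_{n,λ} y^n / n!`. -/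
def dexp (lam y : ℝ) : ℝ := ∑' n : ℕ, dff lam 1 n * y ^ n / n.factorial

/-- Truncated degenerate exponential tail
`T_n(y) = e_λ(y) - ∑_{k=0}^n (1)_{k,λ} y^k / k!`. -/
def dtail (lam y : ℝ) (n : ℕ) : ℝ :=
  dexp lam y - ∑ k ∈ Finset.range (n + 1), dff lam 1 k * y ^ k / k.factorial

lemma aux_summable (lam u : ℝ) (h : |lam * u| < 1) :
    Summable (fun k : ℕ => |dff lam 1 k| * |u| ^ k / k.factorial * (k + 1)) := by
  obtain ⟨N, hN⟩ := exists_nat_ge (4 * |u| / (1 - |lam * u|))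
  have h0 : (0:ℝ) ≤ |lam * u| := abs_nonneg _
  refine summable_of_ratio_norm_eventually_le (r := (|lam * u| + 1) / 2) (by linarith) ?_
  rw [Filter.eventually_atTop]
  refine ⟨N, fun k hk => ?_⟩
  have hk' : (N:ℝ) ≤ k := Nat.cast_le.mpr hk
  have hk0 : (0:ℝ) ≤ k := Nat.cast_nonneg k
  have hfac : (0:ℝ) < (k.factorial : ℝ) := by exact_mod_cast k.factorial_pos
  have hkey : |1 - (k:ℝ) * lam| * |u| * ((k:ℝ) + 2) ≤ (|lam * u| + 1) / 2 * ((k:ℝ) + 1)^2 := by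
    have h1 : |1 - (k:ℝ) * lam| ≤ 1 + (k:ℝ) * |lam| := by
      calc |1 - (k:ℝ) * lam| ≤ |(1:ℝ)| + |(k:ℝ) * lam| := abs_sub _ _
        _ = 1 + (k:ℝ) * |lam| := by rw [abs_one, abs_mul, Nat.abs_cast]
    have h2 : 4 * |u| ≤ (1 - |lam * u|) * (k:ℝ) := by
      have := (div_le_iff₀ (by linarith : (0:ℝ) < 1 - |lam*u|)).mp (hN.trans hk')
      linarith
    have h3 : |lam| * |u| = |lam * u| := (abs_mul lam u).symm
    nlinarith [abs_nonneg u, abs_nonneg lam, abs_nonneg (1 - (k:ℝ)*lam),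
      mul_le_mul_of_nonneg_right h1
        (mul_nonneg (abs_nonneg u) (by linarith : (0:ℝ) ≤ (k:ℝ)+2)),
      mul_le_mul_of_nonneg_left h2 hk0]
  have hd : dff lam 1 (k+1) = dff lam 1 k * (1 - (k:ℝ)*lam) := Finset.prod_range_succ _ _
  have hnn1 : (0:ℝ) ≤ |dff lam 1 k| * |u| ^ k / k.factorial * ((k:ℝ) + 1) := by positivity
  have hnn2 : (0:ℝ) ≤ |dff lam 1 (k+1)| * |u| ^ (k+1) / (k+1).factorial * (((k:ℕ)+1:ℝ) + 1) := by
    positivity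
  simp only [Real.norm_eq_abs]
  rw [abs_of_nonneg (by push_cast; push_cast at hnn2; exact hnn2),
      abs_of_nonneg hnn1]
  have hne1 : ((k:ℝ) + 1) ≠ 0 := by positivity
  have hne2 : ((k.factorial : ℝ)) ≠ 0 := ne_of_gt hfac
  calc |dff lam 1 (k+1)| * |u| ^ (k+1) / ((k+1).factorial : ℝ) * ((((k:ℕ)+1:ℕ):ℝ) + 1)
      = (|dff lam 1 k| * |u|^k / (k.factorial:ℝ) / ((k:ℝ)+1))
          * (|1 - (k:ℝ)*lam| * |u| * ((k:ℝ)+2)) := by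
        rw [hd, abs_mul, pow_succ, Nat.factorial_succ]
        push_cast
        field_simp
        ring
    _ ≤ (|dff lam 1 k| * |u|^k / (k.factorial:ℝ) / ((k:ℝ)+1))
          * ((|lam * u| + 1) / 2 * ((k:ℝ)+1)^2) := by
        apply mul_le_mul_of_nonneg_left hkey (by positivity)
    _ = (|lam * u| + 1) / 2 * (|dff lam 1 k| * |u|^k / (k.factorial:ℝ) * ((k:ℝ)+1)) := by
        field_simp

set_option maxHeartbeats 1000000 in
theorem stmt_0 (lam y x : ℝ) (hy : |lam * y| < 1) (hx : x ≠ 1) (hxy : |lam * (x * y)| < 1) :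
    HasSum (fun n : ℕ => dtail lam y n * x ^ n)
      ((dexp lam (x * y) - dexp lam y) / (x - 1)) := by
  set M : ℝ := max 1 |x| with hMdef
  have hM1 : (1:ℝ) ≤ M := le_max_left _ _
  have hxM : |x| ≤ M := le_max_right _ _
  have hM0 : (0:ℝ) < M := lt_of_lt_of_le one_pos hM1
  have hyM : |y| ≤ |y * M| := by
    rw [abs_mul, abs_of_pos hM0]
    nlinarith [abs_nonneg y]
  have hxyM : |x * y| ≤ |y * M| := by
    rw [abs_mul, abs_mul, abs_of_pos hM0, mul_comm |x| |y|]
    exact mul_le_mul_of_nonneg_left hxM (abs_nonneg y)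
  have hu : |lam * (y * M)| < 1 := by
    rcases le_total |x| 1 with hc | hc
    · have hMe : M = 1 := max_eq_left hc
      rw [hMe, mul_one]
      exact hy
    · have hMe : M = |x| := max_eq_right hc
      have : |lam * (y * M)| = |lam * (x * y)| := by
        rw [hMe, abs_mul, abs_mul, abs_mul, abs_mul, abs_abs]
        ring
      rw [this]; exact hxy
  have hb := aux_summable lam (y * M) hu
  -- summability of the basic series
  have ha : Summable (fun k : ℕ => dff lam 1 k * y ^ k / k.factorial) := by
    apply Summable.of_norm_bounded hb
    intro k
    have : ‖dff lam 1 k * y ^ k / (k.factorial:ℝ)‖ = |dff lam 1 k| * |y| ^ k / (k.factorial:ℝ) := by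
      rw [Real.norm_eq_abs, abs_div, abs_mul, abs_pow, Nat.abs_cast]
    rw [this]
    calc |dff lam 1 k| * |y| ^ k / (k.factorial:ℝ)
        ≤ |dff lam 1 k| * |y * M| ^ k / (k.factorial:ℝ) := by
          gcongr
      _ ≤ |dff lam 1 k| * |y * M| ^ k / (k.factorial:ℝ) * ((k:ℝ) + 1) := by
          apply le_mul_of_one_le_right (by positivity)
          have : (0:ℝ) ≤ (k:ℝ) := Nat.cast_nonneg k
          linarith
  have haxy : Summable (fun k : ℕ => dff lam 1 k * (x * y) ^ k / k.factorial) := by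
    apply Summable.of_norm_bounded hb
    intro k
    have : ‖dff lam 1 k * (x*y) ^ k / (k.factorial:ℝ)‖
        = |dff lam 1 k| * |x*y| ^ k / (k.factorial:ℝ) := by
      rw [Real.norm_eq_abs, abs_div, abs_mul, abs_pow, Nat.abs_cast]
    rw [this]
    calc |dff lam 1 k| * |x*y| ^ k / (k.factorial:ℝ)
        ≤ |dff lam 1 k| * |y * M| ^ k / (k.factorial:ℝ) := by
          gcongr
      _ ≤ |dff lam 1 k| * |y * M| ^ k / (k.factorial:ℝ) * ((k:ℝ) + 1) := by
          apply le_mul_of_one_le_right (by positivity)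
          have : (0:ℝ) ≤ (k:ℝ) := Nat.cast_nonneg k
          linarith
  -- the double-indexed family
  set F : ℕ × ℕ → ℝ :=
    fun p => if p.1 < p.2 then dff lam 1 p.2 * y ^ p.2 / (p.2).factorial * x ^ p.1 else 0
    with hFdef
  set c : ℕ → ℝ := fun k => |dff lam 1 k| * |y * M| ^ k / k.factorial with hcdef
  have hcnn : ∀ k, 0 ≤ c k := fun k => by rw [hcdef]; positivity
  -- summability of the dominating family
  have hg' : Summable (fun p : ℕ × ℕ => if p.2 < p.1 then c p.1 else 0) := by
    rw [summable_prod_of_nonneg]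
    · constructor
      · intro k
        apply summable_of_ne_finset_zero (s := Finset.range k)
        intro n hn
        simp only [Finset.mem_range] at hn
        simp [hn]
      · have hval : ∀ k : ℕ, (∑' n : ℕ, if n < k then c k else 0) = (k:ℝ) * c k := by
          intro k
          rw [tsum_eq_sum (s := Finset.range k)
            (by intro n hn; simp only [Finset.mem_range] at hn; simp [hn])]
          rw [Finset.sum_congr rfl (fun n hn => if_pos (Finset.mem_range.mp hn))]
          rw [Finset.sum_const, Finset.card_range, nsmul_eq_mul]
        apply Summable.of_norm_bounded hb
        intro k
        rw [hval k, Real.norm_eq_abs,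
          abs_of_nonneg (mul_nonneg (Nat.cast_nonneg k) (hcnn k))]
        calc (k:ℝ) * c k ≤ ((k:ℝ) + 1) * c k := by
              apply mul_le_mul_of_nonneg_right (by linarith) (hcnn k)
          _ = |dff lam 1 k| * |y * M| ^ k / k.factorial * ((k:ℝ) + 1) := by
              rw [hcdef]; ring
    · intro p
      dsimp only
      split_ifs
      · exact hcnn _
      · exact le_rfl
  have hFs : Summable F := by
    apply Summable.of_norm_bounded (g := fun p : ℕ × ℕ => if p.1 < p.2 then c p.2 else 0) ?_ ?_
    · have h := hg'.prod_symm
      apply h.congr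
      intro p
      rfl
    · rintro ⟨n, k⟩
      simp only [hFdef]
      by_cases hnk : n < k
      · rw [if_pos hnk, if_pos hnk]
        have hxk : |x| ^ n ≤ M ^ k :=
          (pow_le_pow_left₀ (abs_nonneg x) hxM n).trans (pow_le_pow_right₀ hM1 (le_of_lt hnk))
        calc ‖dff lam 1 k * y ^ k / (k.factorial:ℝ) * x ^ n‖
            = |dff lam 1 k| * |y| ^ k / (k.factorial:ℝ) * |x| ^ n := by
              rw [Real.norm_eq_abs, abs_mul, abs_div, abs_mul, abs_pow, abs_pow, Nat.abs_cast]
          _ ≤ |dff lam 1 k| * |y| ^ k / (k.factorial:ℝ) * M ^ k := by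
              gcongr
          _ = c k := by
              rw [hcdef]
              simp only [abs_mul, abs_of_pos hM0, mul_pow]
              ring
      · rw [if_neg hnk, if_neg hnk, norm_zero]
  have hrow : ∀ n : ℕ, HasSum (fun k => F (n, k)) (dtail lam y n * x ^ n) := by
    intro n
    have h1 : HasSum (fun k : ℕ => dff lam 1 k * y ^ k / k.factorial) (dexp lam y) := ha.hasSum
    have h2 : HasSum
        (fun k : ℕ => if k ∈ Finset.range (n+1) then dff lam 1 k * y ^ k / k.factorial else 0)
        (∑ k ∈ Finset.range (n+1), dff lam 1 k * y ^ k / k.factorial) := by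
      have h := hasSum_sum_of_ne_finset_zero (L := SummationFilter.unconditional ℕ) (s := Finset.range (n+1))
        (f := fun k : ℕ => if k ∈ Finset.range (n+1) then dff lam 1 k * y ^ k / k.factorial else 0)
        (by intro b hb; simp [hb])
      rwa [Finset.sum_congr rfl (fun k hk => if_pos hk)] at h
    have h3 := (h1.sub h2).mul_right (x ^ n)
    have heq : (fun k : ℕ => (dff lam 1 k * y ^ k / k.factorial -
        if k ∈ Finset.range (n+1) then dff lam 1 k * y ^ k / k.factorial else 0) * x ^ n)
        = fun k => F (n, k) := by
      funext k
      simp only [hFdef, Finset.mem_range]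
      by_cases hkn : n < k
      · rw [if_pos hkn, if_neg (by omega)]
        ring
      · rw [if_neg hkn, if_pos (by omega)]
        ring
    rw [heq] at h3
    exact h3
  have hcol : ∀ k : ℕ, HasSum (fun n => F (n, k))
      (dff lam 1 k * y ^ k / k.factorial * ((x ^ k - 1) / (x - 1))) := by
    intro k
    have h1 := hasSum_sum_of_ne_finset_zero (L := SummationFilter.unconditional ℕ) (s := Finset.range k)
      (f := fun n : ℕ => F (n, k))
      (by intro n hn
          simp only [Finset.mem_range] at hn
          simp only [hFdef]
          rw [if_neg (by omega)])
    have h2 : ∑ n ∈ Finset.range k, F (n, k)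
        = dff lam 1 k * y ^ k / k.factorial * ((x ^ k - 1) / (x - 1)) := by
      rw [Finset.sum_congr rfl
        (fun n hn => by simp only [hFdef]; rw [if_pos (Finset.mem_range.mp hn)])]
      rw [← Finset.mul_sum, geom_sum_eq hx]
    rwa [h2] at h1
  have htot1 : HasSum (fun n => dtail lam y n * x ^ n) (∑' p, F p) :=
    hFs.hasSum.prod_fiberwise hrow
  have hswap : HasSum (fun p : ℕ × ℕ => F p.swap) (∑' p, F p) :=
    (Equiv.prodComm ℕ ℕ).hasSum_iff.mpr hFs.hasSum
  have htot2 : HasSum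
      (fun k : ℕ => dff lam 1 k * y ^ k / k.factorial * ((x ^ k - 1) / (x - 1)))
      (∑' p, F p) :=
    hswap.prod_fiberwise (fun k => hcol k)
  have hx1 : HasSum (fun k : ℕ => dff lam 1 k * (x * y) ^ k / k.factorial)
      (dexp lam (x * y)) := haxy.hasSum
  have hy1 : HasSum (fun k : ℕ => dff lam 1 k * y ^ k / k.factorial) (dexp lam y) := ha.hasSum
  have h2 := (hx1.sub hy1).div_const (x - 1)
  have heq2 : (fun k : ℕ =>
      (dff lam 1 k * (x * y) ^ k / k.factorial - dff lam 1 k * y ^ k / k.factorial) / (x - 1))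
      = fun k : ℕ => dff lam 1 k * y ^ k / k.factorial * ((x ^ k - 1) / (x - 1)) := by
    funext k
    rw [mul_pow]
    ring
  rw [heq2] at h2
  rwa [htot2.unique h2] at htot1
end
end

section
/- For every real λ and every real y with |λy| < 1, one has Σ_{n=0}^∞ T_n(y) = (y/(1+λy)) e_λ(y), where the series on the left converges. -/
open Filter

noncomputable section

namespace DegenAux

/-- The general term of the degenerate exponential series. -/
def aa (lam y : ℝ) (k : ℕ) : ℝ := dff lam 1 k * y ^ k / k.factorial

lemma aa_succ (lam y : ℝ) (k : ℕ) :
    aa lam y (k + 1) = aa lam y k * ((1 - k * lam) * y / (k + 1)) := by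
  unfold aa dff
  rw [Finset.prod_range_succ]
  have hk : ((k.factorial : ℝ)) ≠ 0 := Nat.cast_ne_zero.mpr k.factorial_ne_zero
  have hk1 : ((k : ℝ) + 1) ≠ 0 := by positivity
  rw [Nat.factorial_succ]
  push_cast
  field_simp
  simp only [mul_comm _ lam]; ring

lemma summable_g (lam y : ℝ) (hy : |lam * y| < 1) :
    Summable (fun k : ℕ => (k : ℝ) * aa lam y k) := by
  set r := |lam * y| with hr
  have hr0 : 0 ≤ r := abs_nonneg _
  apply summable_of_ratio_norm_eventually_le (r := (1 + r) / 2) (by linarith)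
  have h0 : Tendsto (fun k : ℕ => |y| / k) atTop (nhds 0) :=
    tendsto_const_div_atTop_nhds_zero_nat _
  have hpos : (0 : ℝ) < (1 - r) / 2 := by linarith
  filter_upwards [h0.eventually (ge_mem_nhds hpos), eventually_ge_atTop 1] with k hk hk1
  have hk0 : (0 : ℝ) < (k : ℝ) := by exact_mod_cast hk1
  have key : ((k : ℝ) + 1) * aa lam y (k + 1) = aa lam y k * ((1 - k * lam) * y) := by
    rw [aa_succ]
    field_simp
  have hnorm : ‖((k + 1 : ℕ) : ℝ) * aa lam y (k + 1)‖ = |aa lam y k| * |y - k * (lam * y)| := by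
    push_cast
    rw [key, Real.norm_eq_abs, abs_mul]
    congr 1
    congr 1
    ring
  rw [hnorm]
  have h1 : |y - (k : ℝ) * (lam * y)| ≤ |y| + k * r := by
    calc |y - (k : ℝ) * (lam * y)| ≤ |y| + |(k : ℝ) * (lam * y)| := abs_sub _ _
    _ = |y| + k * r := by rw [abs_mul, Nat.abs_cast]
  have h2 : |y| ≤ (1 - r) / 2 * k := by
    rw [div_le_iff₀ hk0] at hk
    linarith
  have hnorm2 : ‖(k : ℝ) * aa lam y k‖ = (k : ℝ) * |aa lam y k| := by
    rw [Real.norm_eq_abs, abs_mul, Nat.abs_cast]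
  rw [hnorm2]
  have ha : (0 : ℝ) ≤ |aa lam y k| := abs_nonneg _
  calc |aa lam y k| * |y - (k : ℝ) * (lam * y)| ≤ |aa lam y k| * (|y| + k * r) :=
        mul_le_mul_of_nonneg_left h1 ha
    _ ≤ |aa lam y k| * ((1 + r) / 2 * k) := by
        apply mul_le_mul_of_nonneg_left _ ha
        linarith
    _ = (1 + r) / 2 * ((k : ℝ) * |aa lam y k|) := by ring

lemma summable_aa (lam y : ℝ) (hy : |lam * y| < 1) : Summable (aa lam y) := by
  rw [← summable_nat_add_iff 1]
  have hg := (summable_g lam y hy).comp_injective (add_left_injective 1)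
  apply Summable.of_norm
  apply Summable.of_nonneg_of_le (fun k => norm_nonneg _) _ (hg.abs)
  intro k
  simp only [Function.comp]
  rw [Real.norm_eq_abs, abs_mul, Nat.abs_cast]
  have h1 : (1 : ℝ) ≤ ((k + 1 : ℕ) : ℝ) := by exact_mod_cast Nat.one_le_iff_ne_zero.mpr (Nat.succ_ne_zero k)
  nlinarith [abs_nonneg (aa lam y (k + 1))]

lemma dexp_eq (lam y : ℝ) : dexp lam y = ∑' k, aa lam y k := rfl

/-- Double-indexed family: `(FF lam y) (k, n) = aa k` if `n < k`, else `0`. -/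
def FF (lam y : ℝ) (p : ℕ × ℕ) : ℝ := if p.2 < p.1 then aa lam y p.1 else 0

end DegenAux

namespace DegenAux

set_option maxHeartbeats 1600000 in
theorem stmt_1_aux (lam y : ℝ) (hy : |lam * y| < 1) :
    HasSum (fun n : ℕ => dtail lam y n) (y / (1 + lam * y) * dexp lam y) := by
  have hsa : Summable (aa lam y) := summable_aa lam y hy
  have hsg : Summable (fun k : ℕ => (k : ℝ) * aa lam y k) := summable_g lam y hy
  obtain ⟨S, hSg⟩ : ∃ S, HasSum (fun k : ℕ => (k : ℝ) * aa lam y k) S := hsg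
  have hsg : Summable (fun k : ℕ => (k : ℝ) * aa lam y k) := hSg.summable
  have hSdef : S = ∑' k : ℕ, (k : ℝ) * aa lam y k := hSg.tsum_eq.symm
  -- the double-indexed family
  have hF : ∀ p : ℕ × ℕ, FF lam y p = if p.2 < p.1 then aa lam y p.1 else 0 := fun p => rfl
  -- row sums: for fixed k, sum over n is k * aa k
  have hrow : ∀ (c : ℝ) (k : ℕ), HasSum (fun n : ℕ => if n < k then c else 0) ((k : ℝ) * c) := by
    intro c k
    have h := hasSum_sum_of_ne_finset_zero (L := SummationFilter.unconditional ℕ) (s := Finset.range k)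
      (f := fun n : ℕ => if n < k then c else 0) (by
        intro n hn
        rw [Finset.mem_range] at hn
        simp [hn])
    have heq : ∑ n ∈ Finset.range k, (if n < k then c else 0) = (k : ℝ) * c := by
      rw [Finset.sum_congr rfl (fun n hn => if_pos (Finset.mem_range.mp hn)),
        Finset.sum_const, Finset.card_range, nsmul_eq_mul]
    rwa [heq] at h
  -- summability of |(FF lam y)|
  have hFnorm : Summable (fun p : ℕ × ℕ => ‖(FF lam y) p‖) := by
    rw [summable_prod_of_nonneg (fun p => norm_nonneg _)]
    constructor
    · intro k
      have : (fun n => ‖(FF lam y) (k, n)‖) = fun n : ℕ => if n < k then |aa lam y k| else 0 := by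
        funext n
        rw [hF, Real.norm_eq_abs]
        split <;> simp
      rw [this]
      exact (hrow _ k).summable
    · have : (fun k : ℕ => ∑' n : ℕ, ‖(FF lam y) (k, n)‖) = fun k : ℕ => (k : ℝ) * |aa lam y k| := by
        funext k
        have : (fun n => ‖(FF lam y) (k, n)‖) = fun n : ℕ => if n < k then |aa lam y k| else 0 := by
          funext n
          rw [hF, Real.norm_eq_abs]
          split <;> simp
        rw [this, (hrow _ k).tsum_eq]
      rw [this]
      have := Summable.abs hsg
      simpa [abs_mul, Nat.abs_cast] using this
  have hFs : Summable (FF lam y) := hFnorm.of_norm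
  have hFS : HasSum (FF lam y) S := by
    have h1 : HasSum (FF lam y) (∑' p, (FF lam y) p) := hFs.hasSum
    have h2 : HasSum (fun k : ℕ => (k : ℝ) * aa lam y k) (∑' p, (FF lam y) p) :=
      h1.prod_fiberwise (fun k => hrow (aa lam y k) k)
    rw [hSg.unique h2]
    exact h1
  -- now columns: for fixed n, sum over k is dtail n
  have hcol : ∀ n : ℕ, HasSum (fun k : ℕ => (FF lam y) (k, n)) (dtail lam y n) := by
    intro n
    have hshift : Summable (fun i : ℕ => aa lam y (i + (n + 1))) :=
      (summable_nat_add_iff (n + 1)).mpr hsa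
    have hval : ∑' i : ℕ, aa lam y (i + (n + 1)) = dtail lam y n := by
      have := Summable.sum_add_tsum_nat_add (f := aa lam y) (n + 1) hsa
      unfold dtail
      rw [dexp_eq]
      unfold aa at this ⊢
      linarith [this]
    have h1 : HasSum (fun i : ℕ => aa lam y (i + (n + 1))) (dtail lam y n) := by
      rw [← hval]; exact hshift.hasSum
    have hinj : Function.Injective (fun i : ℕ => i + (n + 1)) := add_left_injective (n + 1)
    rw [← Function.Injective.hasSum_iff hinj (f := fun k : ℕ => (FF lam y) (k, n))
      (by
        intro x hx
        simp only [Set.mem_range, not_exists] at hx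
        have : ¬ n < x := by
          by_contra h
          exact hx (x - (n + 1)) (by omega)
        show (FF lam y) (x, n) = 0
        rw [hF]
        simp [this])]
    convert h1 using 1
    funext i
    simp only [Function.comp]
    rw [hF, if_pos (by omega)]
  -- conclude HasSum dtail S
  have hmain : HasSum (fun n : ℕ => dtail lam y n) S := by
    have hswap : HasSum (fun p : ℕ × ℕ => (FF lam y) p.swap) S :=
      (Equiv.prodComm ℕ ℕ).hasSum_iff.mpr hFS
    exact hswap.prod_fiberwise (fun n => hcol n)
  -- identify S
  have hgshift : ∀ k : ℕ, ((k : ℝ) + 1) * aa lam y (k + 1)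
      = y * aa lam y k - (lam * y) * ((k : ℝ) * aa lam y k) := by
    intro k
    have key : ((k : ℝ) + 1) * aa lam y (k + 1) = aa lam y k * ((1 - k * lam) * y) := by
      rw [aa_succ]
      have : ((k : ℝ) + 1) ≠ 0 := by positivity
      field_simp
    rw [key]; ring
  have hSval : S = y * dexp lam y - (lam * y) * S := by
    have h0 : S = ∑' k : ℕ, ((k : ℝ) + 1) * aa lam y (k + 1) := by
      rw [hSdef, Summable.tsum_eq_zero_add hsg]
      rw [Nat.cast_zero, zero_mul, zero_add]
      apply tsum_congr
      intro k
      push_cast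
      ring
    have hs1 : Summable (fun k : ℕ => y * aa lam y k) := hsa.mul_left y
    have hs2 : Summable (fun k : ℕ => (lam * y) * ((k : ℝ) * aa lam y k)) := hsg.mul_left _
    have e1 : ∑' k : ℕ, ((k : ℝ) + 1) * aa lam y (k + 1)
        = ∑' k : ℕ, (y * aa lam y k - (lam * y) * ((k : ℝ) * aa lam y k)) :=
      tsum_congr hgshift
    have e2 : ∑' k : ℕ, (y * aa lam y k - (lam * y) * ((k : ℝ) * aa lam y k))
        = y * dexp lam y - (lam * y) * S := by
      rw [Summable.tsum_sub hs1 hs2, tsum_mul_left, tsum_mul_left, dexp_eq, ← hSdef]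
    linarith [h0, e1, e2]
  have hne : (1 + lam * y) ≠ 0 := by
    have := neg_lt_of_abs_lt hy
    linarith
  have : S = y / (1 + lam * y) * dexp lam y := by
    rw [div_mul_eq_mul_div, eq_div_iff hne]
    linarith [hSval]
  rwa [this] at hmain

end DegenAux

theorem stmt_1 (lam y : ℝ) (hy : |lam * y| < 1) :
    HasSum (fun n : ℕ => dtail lam y n) (y / (1 + lam * y) * dexp lam y) :=
  DegenAux.stmt_1_aux lam y hy
end
end

section
/- For every real λ with |λ| < 1 and every real x with x ≠ 1 and |λx| < 1, one has Σ_{n=1}^∞ T_n(1) x^n = (e_λ(x) − x e_λ(1))/(x − 1) + 1, where the series on the left converges. -/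
noncomputable section

namespace StmtAux

/-- abbreviation for the coefficients -/
def aa (lam : ℝ) (k : ℕ) : ℝ := dff lam 1 k / k.factorial

lemma dexp_eq (lam y : ℝ) : dexp lam y = ∑' k : ℕ, aa lam k * y ^ k := by
  unfold dexp aa
  exact tsum_congr fun k => (mul_div_right_comm _ _ _)

lemma aa_zero (lam : ℝ) : aa lam 0 = 1 := by simp [aa, dff]

lemma aa_one (lam : ℝ) : aa lam 1 = 1 := by simp [aa, dff]

lemma key_bound (lam ρ : ℝ) (hρ : |lam| < ρ) :
    ∃ C : ℝ, 0 ≤ C ∧ ∀ k : ℕ, |aa lam k| ≤ C * ρ ^ k := by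
  have hρ0 : 0 < ρ := lt_of_le_of_lt (abs_nonneg lam) hρ
  set b : ℕ → ℝ := fun k => |aa lam k| with hbdef
  have hb0 : ∀ k, 0 ≤ b k := fun k => abs_nonneg _
  have hstep : ∀ k : ℕ, b (k + 1) ≤ (1 + k * |lam|) / (k + 1) * b k := by
    intro k
    have hfac : ((k : ℝ) + 1) ≠ 0 := by positivity
    have hfk : ((k.factorial : ℝ)) ≠ 0 := by
      exact_mod_cast Nat.factorial_ne_zero k
    have e1 : aa lam (k + 1) = aa lam k * ((1 - k * lam) / (k + 1)) := by
      simp only [aa, dff, Finset.prod_range_succ, Nat.factorial_succ]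
      push_cast
      rw [div_mul_div_comm]
      ring
    have e2 : b (k + 1) = b k * (|1 - k * lam| / (k + 1)) := by
      rw [hbdef]
      simp only [e1, abs_mul, abs_div]
      rw [abs_of_pos (by positivity : (0:ℝ) < (k:ℝ) + 1)]
    rw [e2]
    have h3 : |1 - (k : ℝ) * lam| ≤ 1 + k * |lam| := by
      calc |1 - (k:ℝ) * lam| ≤ |(1:ℝ)| + |(k:ℝ) * lam| := abs_sub _ _
        _ = 1 + k * |lam| := by rw [abs_one, abs_mul, Nat.abs_cast]
    calc b k * (|1 - k * lam| / (k + 1)) ≤ b k * ((1 + k * |lam|) / (k + 1)) := by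
          apply mul_le_mul_of_nonneg_left _ (hb0 k)
          exact div_le_div_of_nonneg_right h3 (by positivity) |>.trans_eq rfl
      _ = (1 + k * |lam|) / (k + 1) * b k := by ring
  obtain ⟨N, hN⟩ := exists_nat_ge ((1 - ρ) / (ρ - |lam|))
  have hgeom : ∀ k : ℕ, N ≤ k → b (k + 1) ≤ ρ * b k := by
    intro k hk
    refine (hstep k).trans ?_
    apply mul_le_mul_of_nonneg_right _ (hb0 k)
    rw [div_le_iff₀ (by positivity : (0:ℝ) < (k:ℝ) + 1)]
    have hk' : (1 - ρ) / (ρ - |lam|) ≤ (k : ℝ) := hN.trans (by exact_mod_cast hk)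
    have := (div_le_iff₀ (by linarith : (0:ℝ) < ρ - |lam|)).mp hk'
    nlinarith
  have hiter : ∀ m : ℕ, b (N + m) ≤ b N * ρ ^ m := by
    intro m
    induction m with
    | zero => simp
    | succ m ih =>
      have := hgeom (N + m) (Nat.le_add_right _ _)
      calc b (N + (m+1)) = b ((N + m) + 1) := by ring_nf
        _ ≤ ρ * b (N + m) := this
        _ ≤ ρ * (b N * ρ ^ m) := by
            exact mul_le_mul_of_nonneg_left ih hρ0.le
        _ = b N * ρ ^ (m + 1) := by ring
  set C : ℝ := ∑ j ∈ Finset.range (N + 1), b j / ρ ^ j with hCdef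
  have hterm : ∀ j, 0 ≤ b j / ρ ^ j := fun j => div_nonneg (hb0 j) (by positivity)
  have hC0 : 0 ≤ C := Finset.sum_nonneg fun j _ => hterm j
  have hmem : ∀ j, j ≤ N → b j / ρ ^ j ≤ C := by
    intro j hj
    exact Finset.single_le_sum (fun i _ => hterm i)
      (Finset.mem_range.mpr (Nat.lt_succ_of_le hj))
  have hle : ∀ j, j ≤ N → b j ≤ C * ρ ^ j := by
    intro j hj
    have := hmem j hj
    rw [div_le_iff₀ (by positivity : (0:ℝ) < ρ ^ j)] at this
    linarith
  refine ⟨C, hC0, ?_⟩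
  intro k
  rcases le_or_gt k N with h | h
  · exact hle k h
  · obtain ⟨m, rfl⟩ : ∃ m, k = N + m := ⟨k - N, by omega⟩
    calc b (N + m) ≤ b N * ρ ^ m := hiter m
      _ ≤ (C * ρ ^ N) * ρ ^ m := by
          exact mul_le_mul_of_nonneg_right (hle N le_rfl) (by positivity)
      _ = C * ρ ^ (N + m) := by rw [pow_add]; ring

end StmtAux

set_option maxHeartbeats 1000000 in
open StmtAux in
theorem stmt_2 (lam x : ℝ) (hl : |lam| < 1) (hx : x ≠ 1) (hlx : |lam * x| < 1) :
    HasSum (fun n : ℕ => dtail lam 1 (n + 1) * x ^ (n + 1))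
      ((dexp lam x - x * dexp lam 1) / (x - 1) + 1) := by
  have hx1 : x - 1 ≠ 0 := sub_ne_zero.mpr hx
  -- set up the geometric parameter ρ
  set M : ℝ := max |x| 1 with hMdef
  have hM1 : (1 : ℝ) ≤ M := le_max_right _ _
  have hM0 : (0 : ℝ) < M := lt_of_lt_of_le one_pos hM1
  have hxM : |x| ≤ M := le_max_left _ _
  have hlM : |lam| * M < 1 := by
    rw [hMdef, mul_max_of_nonneg _ _ (abs_nonneg lam)]
    rw [max_lt_iff]
    constructor
    · rw [← abs_mul]; exact hlx
    · simpa using hl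
  have hlinv : |lam| < 1 / M := by
    rw [lt_div_iff₀ hM0]; exact hlM
  set ρ : ℝ := (|lam| + 1 / M) / 2 with hρdef
  have hrlam : |lam| < ρ := by rw [hρdef]; linarith
  have hρ0 : 0 < ρ := lt_of_le_of_lt (abs_nonneg lam) hrlam
  have hρinv : ρ < 1 / M := by rw [hρdef]; linarith
  have hρM : ρ * M < 1 := by
    rw [← lt_div_iff₀ hM0]; exact hρinv
  have hρ1 : ρ < 1 := lt_of_lt_of_le (by rwa [← lt_div_iff₀ hM0] at hρM) (by
    rw [div_le_one hM0]; exact hM1)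
  have hρx : ρ * |x| < 1 := lt_of_le_of_lt (mul_le_mul_of_nonneg_left hxM hρ0.le) hρM
  obtain ⟨C, hC0, hCb⟩ := key_bound lam ρ hrlam
  -- summability of the basic series
  have hsum_y : ∀ y : ℝ, |y| ≤ M → Summable (fun k : ℕ => aa lam k * y ^ k) := by
    intro y hy
    apply Summable.of_norm
    apply Summable.of_nonneg_of_le (fun k => norm_nonneg _)
      (f := fun k => C * (ρ * M) ^ k)
    · intro k
      rw [Real.norm_eq_abs, abs_mul, abs_pow, mul_pow]
      have h1 : |aa lam k| * |y| ^ k ≤ (C * ρ ^ k) * M ^ k := by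
        apply mul_le_mul (hCb k) (pow_le_pow_left₀ (abs_nonneg y) hy k)
          (by positivity) (by positivity)
      calc |aa lam k| * |y| ^ k ≤ C * ρ ^ k * M ^ k := h1
        _ = C * (ρ ^ k * M ^ k) := by ring
    · exact (summable_geometric_of_lt_one (by positivity) hρM).mul_left C
  have hsum1 : Summable (fun k : ℕ => aa lam k) := by
    have := hsum_y 1 (by simpa using hM1)
    simpa using this
  have hsumx : Summable (fun k : ℕ => aa lam k * x ^ k) := hsum_y x hxM
  have hd1 : dexp lam 1 = ∑' k : ℕ, aa lam k := by
    rw [dexp_eq]; simp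
  -- the double-indexed function
  set f : ℕ × ℕ → ℝ := fun p => aa lam (p.1 + p.2 + 2) * x ^ (p.1 + 1) with hfdef
  have hf : Summable f := by
    apply Summable.of_norm
    set D : ℝ := C * ρ ^ 2 * |x| with hDdef
    apply Summable.of_nonneg_of_le (fun p => norm_nonneg _)
      (f := fun p : ℕ × ℕ => (D * (ρ * |x|) ^ p.1) * ρ ^ p.2)
    · rintro ⟨n, j⟩
      simp only [hfdef, Real.norm_eq_abs, abs_mul, abs_pow]
      calc |aa lam (n + j + 2)| * |x| ^ (n + 1)
          ≤ (C * ρ ^ (n + j + 2)) * |x| ^ (n + 1) := by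
            exact mul_le_mul_of_nonneg_right (hCb _) (by positivity)
        _ = (D * (ρ * |x|) ^ n) * ρ ^ j := by
            rw [hDdef, pow_add, pow_add, pow_succ, mul_pow]
            ring
    · exact Summable.mul_of_nonneg
        ((summable_geometric_of_lt_one (by positivity) hρx).mul_left D)
        (summable_geometric_of_lt_one hρ0.le hρ1)
        (fun n => by positivity) (fun j => by positivity)
  -- row sums : fibers over the first coordinate
  have hrow : ∀ n : ℕ, HasSum (fun j => f (n, j)) (dtail lam 1 (n + 1) * x ^ (n + 1)) := by
    intro n
    have h := (hasSum_nat_add_iff' (f := fun k => aa lam k) (n + 2)).mpr hsum1.hasSum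
    have h2 := h.mul_right (x ^ (n + 1))
    have heq : (fun j => f (n, j)) = fun j => aa lam (j + (n + 2)) * x ^ (n + 1) := by
      funext j
      simp only [hfdef]
      congr 2
      omega
    rw [heq]
    convert h2 using 1
    · rfl
    rw [dtail, hd1]
    congr 1
    congr 1
    exact Finset.sum_congr rfl fun k _ => by simp [aa]
  -- column sums : along antidiagonals
  set g : ℕ → ℝ := fun m => aa lam (m + 2) * ((x ^ (m + 2) - x) / (x - 1)) with hgdef
  have hS := hf.hasSum
  have hleft : HasSum (fun n : ℕ => dtail lam 1 (n + 1) * x ^ (n + 1)) (∑' p, f p) :=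
    hS.prod_fiberwise hrow
  have hfe : HasSum (f ∘ Finset.HasAntidiagonal.sigmaAntidiagonalEquivProd) (∑' p, f p) :=
    (Equiv.hasSum_iff _).mpr hS
  have hcol : ∀ m : ℕ,
      HasSum (fun c : (Finset.HasAntidiagonal.antidiagonal m : Finset (ℕ × ℕ)) =>
        (f ∘ Finset.HasAntidiagonal.sigmaAntidiagonalEquivProd) ⟨m, c⟩) (g m) := by
    intro m
    have hfin := hasSum_fintype
      (fun c : (Finset.HasAntidiagonal.antidiagonal m : Finset (ℕ × ℕ)) =>
        (f ∘ Finset.HasAntidiagonal.sigmaAntidiagonalEquivProd) ⟨m, c⟩)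
    convert hfin using 1
    have e1 : ∑ c : (Finset.HasAntidiagonal.antidiagonal m : Finset (ℕ × ℕ)),
        (f ∘ Finset.HasAntidiagonal.sigmaAntidiagonalEquivProd) ⟨m, c⟩
        = ∑ p ∈ Finset.HasAntidiagonal.antidiagonal m, f p := by
      rw [← Finset.sum_coe_sort (Finset.HasAntidiagonal.antidiagonal m) f]
      rfl
    rw [e1, Finset.Nat.sum_antidiagonal_eq_sum_range_succ_mk]
    have e2 : ∀ k ∈ Finset.range (m + 1), f (k, m - k) = aa lam (m + 2) * x ^ (k + 1) := by
      intro k hk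
      rw [Finset.mem_range] at hk
      simp only [hfdef]
      congr 2
      omega
    have e3 : ∑ k ∈ Finset.range (m + 1), x ^ (k + 1)
        = x * ∑ k ∈ Finset.range (m + 1), x ^ k := by
      rw [Finset.mul_sum]
      exact Finset.sum_congr rfl fun k _ => by ring
    rw [Finset.sum_congr rfl e2, ← Finset.mul_sum, e3, geom_sum_eq hx]
    simp only [hgdef]
    have hp : x ^ (m + 2) = x * x ^ (m + 1) := by
      rw [show m + 2 = (m + 1) + 1 from rfl, pow_succ]; ring
    rw [hp]
    congr 1
    rw [← mul_div_assoc]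
    congr 1
    ring
  have hg : HasSum g (∑' p, f p) := HasSum.sigma hfe hcol
  -- compute the value of ∑ g directly
  have hdx : HasSum (fun k : ℕ => aa lam k * x ^ k) (dexp lam x) := by
    rw [dexp_eq]; exact hsumx.hasSum
  have hd1' : HasSum (fun k : ℕ => aa lam k) (dexp lam 1) := by
    rw [hd1]; exact hsum1.hasSum
  have h2 : HasSum (fun m : ℕ => aa lam (m + 2) * x ^ (m + 2)) (dexp lam x - (1 + x)) := by
    have := (hasSum_nat_add_iff' (f := fun k => aa lam k * x ^ k) 2).mpr hdx
    convert this using 2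
    · rfl
    rw [Finset.sum_range_succ, Finset.sum_range_one, aa_zero, aa_one]
    ring
  have h3 : HasSum (fun m : ℕ => aa lam (m + 2)) (dexp lam 1 - 2) := by
    have := (hasSum_nat_add_iff' (f := fun k => aa lam k) 2).mpr hd1'
    convert this using 2
    · rfl
    rw [Finset.sum_range_succ, Finset.sum_range_one, aa_zero, aa_one]
    ring
  have hg' : HasSum g ((dexp lam x - x * dexp lam 1) / (x - 1) + 1) := by
    have hcomb := (h2.mul_right ((x - 1)⁻¹)).sub (h3.mul_right (x * (x - 1)⁻¹))
    convert hcomb using 1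
    · rfl
    · funext m
      rw [hgdef]
      field_simp
    · field_simp
      ring
  have : (∑' p, f p) = (dexp lam x - x * dexp lam 1) / (x - 1) + 1 := hg.unique hg'
  rwa [this] at hleft
end
end

section
/- For every real λ with |λ| < 1, one has Σ_{n=1}^∞ T_n(1) = 1 − (λ/(1+λ)) e_λ(1), where the series on the left converges. -/
noncomputable section

def aa (lam : ℝ) (k : ℕ) : ℝ := dff lam 1 k / k.factorial

lemma aa_succ (lam : ℝ) (k : ℕ) : aa lam (k + 1) = aa lam k * ((1 - k * lam) / (k + 1)) := by
  have h : (k.factorial : ℝ) ≠ 0 := Nat.cast_ne_zero.mpr k.factorial_ne_zero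
  have h2 : ((k : ℝ) + 1) ≠ 0 := by positivity
  simp only [aa, dff, Finset.prod_range_succ, Nat.factorial_succ]
  push_cast
  rw [div_mul_div_comm, mul_comm ((k:ℝ) + 1)]

lemma abs_aa_succ (lam : ℝ) (k : ℕ) :
    |aa lam (k + 1)| = |aa lam k| * (|1 - (k : ℝ) * lam| / (k + 1)) := by
  rw [aa_succ, abs_mul, abs_div, abs_of_nonneg (by positivity : (0:ℝ) ≤ (k:ℝ) + 1)]

lemma key_summable (lam : ℝ) (hl : |lam| < 1) :
    Summable (fun k : ℕ => ((k : ℝ) + 1) * |aa lam k|) := by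
  set t := |lam| with ht
  have ht0 : 0 ≤ t := abs_nonneg _
  set r : ℝ := (1 + t) / 2 with hr
  have hrt : t < r := by rw [hr]; linarith
  have hr1 : r < 1 := by rw [hr]; linarith
  have hrt' : 0 < r - t := by linarith
  obtain ⟨N, hN⟩ := exists_nat_ge ((3 + 2 * t) / (r - t) + 1)
  apply summable_of_ratio_norm_eventually_le hr1
  filter_upwards [Filter.eventually_ge_atTop N] with k hk
  have hk' : (3 + 2 * t) / (r - t) + 1 ≤ (k : ℝ) := le_trans hN (by exact_mod_cast hk)
  have hk2 : 3 + 2 * t ≤ (k : ℝ) * (r - t) - (r - t) := by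
    have := (div_le_iff₀ hrt').mp (by linarith : (3 + 2 * t) / (r - t) ≤ (k : ℝ) - 1)
    linarith
  have hk1 : (1 : ℝ) ≤ (k : ℝ) := by
    have : 0 < (3 + 2 * t) / (r - t) := by positivity
    linarith
  have h1 : |1 - (k : ℝ) * lam| ≤ 1 + k * t := by
    calc |1 - (k : ℝ) * lam| ≤ |(1:ℝ)| + |(k:ℝ) * lam| := abs_sub _ _
    _ = 1 + k * t := by rw [abs_one, abs_mul, Nat.abs_cast]
  have hkpos : (0:ℝ) < (k:ℝ) + 1 := by positivity
  have habs : (0:ℝ) ≤ |aa lam k| := abs_nonneg _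
  rw [Real.norm_eq_abs, Real.norm_eq_abs]
  push_cast
  rw [abs_of_nonneg (show (0:ℝ) ≤ ((k:ℝ)+1+1) * |aa lam (k+1)| by positivity),
    abs_of_nonneg (show (0:ℝ) ≤ ((k:ℝ)+1) * |aa lam k| by positivity), abs_aa_succ]
  have hmain : ((k:ℝ) + 2) * |1 - (k:ℝ) * lam| ≤ r * ((k:ℝ) + 1) ^ 2 := by
    have h2 : ((k:ℝ) + 2) * |1 - (k:ℝ) * lam| ≤ ((k:ℝ) + 2) * (1 + k * t) := by
      apply mul_le_mul_of_nonneg_left h1 (by positivity)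
    refine le_trans h2 ?_
    nlinarith [mul_le_mul_of_nonneg_left hk2 (le_trans zero_le_one hk1)]
  calc ((k:ℝ) + 1 + 1) * (|aa lam k| * (|1 - (k:ℝ)*lam| / ((k:ℝ)+1)))
      = (((k:ℝ) + 2) * |1 - (k:ℝ)*lam|) * (|aa lam k| / ((k:ℝ)+1)) := by ring
    _ ≤ (r * ((k:ℝ)+1)^2) * (|aa lam k| / ((k:ℝ)+1)) := by
        apply mul_le_mul_of_nonneg_right hmain (by positivity)
    _ = r * (((k:ℝ)+1) * |aa lam k|) := by field_simp

section main
variable (lam : ℝ) (hl : |lam| < 1)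
include hl

lemma summable_abs_aa : Summable (fun k : ℕ => |aa lam k|) :=
  (key_summable lam hl).of_nonneg_of_le (fun k => abs_nonneg _)
    (fun k => le_mul_of_one_le_left (abs_nonneg _) (by linarith [Nat.cast_nonneg (α := ℝ) k]))

lemma summable_aa : Summable (aa lam) :=
  summable_abs_iff.mp (summable_abs_aa lam hl)

lemma summable_mul_aa : Summable (fun k : ℕ => (k : ℝ) * aa lam k) := by
  rw [← summable_abs_iff]
  refine (key_summable lam hl).of_nonneg_of_le (fun k => abs_nonneg _) (fun k => ?_)
  rw [abs_mul, Nat.abs_cast]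
  exact mul_le_mul_of_nonneg_right (by linarith) (abs_nonneg _)

omit hl in
lemma dexp_eq : dexp lam 1 = ∑' k, aa lam k := by
  unfold dexp aa; simp

lemma hasSum_aa : HasSum (aa lam) (dexp lam 1) := by
  rw [dexp_eq]; exact (summable_aa lam hl).hasSum

lemma S_eq : ∑' k : ℕ, (k : ℝ) * aa lam k = dexp lam 1 / (1 + lam) := by
  set S := ∑' k : ℕ, (k : ℝ) * aa lam k with hS
  have hsum : HasSum (fun k : ℕ => (k : ℝ) * aa lam k) S := (summable_mul_aa lam hl).hasSum
  have h1 : HasSum (fun k : ℕ => ((k : ℝ) + 1) * aa lam (k + 1)) S := by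
    have := (hasSum_nat_add_iff' (f := fun k : ℕ => (k : ℝ) * aa lam k) 1 (g := S)).mpr hsum
    simp only [Finset.range_one, Finset.sum_singleton, Nat.cast_zero, zero_mul, sub_zero] at this
    refine this.congr_fun fun k => by push_cast; ring_nf
  have h2 : HasSum (fun k : ℕ => ((k : ℝ) + 1) * aa lam (k + 1)) (dexp lam 1 - lam * S) := by
    have := (hasSum_aa lam hl).sub (hsum.mul_left lam)
    refine this.congr_fun fun k => ?_
    rw [aa_succ]
    have : ((k : ℝ) + 1) ≠ 0 := by positivity
    field_simp
  have hSeq : S = dexp lam 1 - lam * S := h1.unique h2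
  have hne : (1 + lam) ≠ 0 := by
    have h := abs_lt.mp hl
    intro h0; linarith [h.1, h.2]
  field_simp
  linarith
lemma hasSum_target : HasSum (fun j : ℕ => ((j : ℝ) + 1) * aa lam (j + 2))
    (dexp lam 1 / (1 + lam) - dexp lam 1 + 1) := by
  set S := ∑' k : ℕ, (k : ℝ) * aa lam k with hS
  have hsum : HasSum (fun k : ℕ => (k : ℝ) * aa lam k - aa lam k) (S - dexp lam 1) :=
    (summable_mul_aa lam hl).hasSum.sub (hasSum_aa lam hl)
  have h1 := (hasSum_nat_add_iff' (f := fun k : ℕ => (k : ℝ) * aa lam k - aa lam k) 2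
    (g := S - dexp lam 1)).mpr hsum
  have haa0 : aa lam 0 = 1 := by simp [aa, dff]
  have hr : ∑ i ∈ Finset.range 2, ((i : ℝ) * aa lam i - aa lam i) = -1 := by
    simp [Finset.sum_range_succ, haa0]
  rw [hr] at h1
  have h2 : S - dexp lam 1 - (-1) = dexp lam 1 / (1 + lam) - dexp lam 1 + 1 := by
    rw [hS, S_eq lam hl]; ring
  rw [h2] at h1
  refine h1.congr_fun fun j => by push_cast; ring

lemma summable_f2 : Summable (fun p : ℕ × ℕ => aa lam (p.1 + p.2 + 2)) := by
  rw [← (Finset.HasAntidiagonal.sigmaAntidiagonalEquivProd (A := ℕ)).summable_iff]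
  have heq : ((fun p : ℕ × ℕ => aa lam (p.1 + p.2 + 2)) ∘
      (Finset.HasAntidiagonal.sigmaAntidiagonalEquivProd (A := ℕ)))
      = fun x : (Σ n : ℕ, Finset.HasAntidiagonal.antidiagonal n) => aa lam (x.1 + 2) := by
    funext x
    obtain ⟨n, ⟨p, hp⟩⟩ := x
    rw [Finset.HasAntidiagonal.mem_antidiagonal] at hp
    simp [Finset.HasAntidiagonal.sigmaAntidiagonalEquivProd, hp]
  rw [heq, ← summable_abs_iff]
  rw [summable_sigma_of_nonneg (fun _ => abs_nonneg _)]
  constructor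
  · intro n; exact Summable.of_finite
  · have h1 : Summable (fun n : ℕ => (((n + 2 : ℕ) : ℝ) + 1) * |aa lam (n + 2)|) :=
      (summable_nat_add_iff 2).mpr (key_summable lam hl)
    have h2 : Summable (fun n : ℕ => ((n : ℝ) + 1) * |aa lam (n + 2)|) := by
      refine h1.of_nonneg_of_le (fun n => by positivity) (fun n => ?_)
      have : ((n : ℝ) + 1) ≤ ((n + 2 : ℕ) : ℝ) + 1 := by push_cast; linarith
      exact mul_le_mul_of_nonneg_right this (abs_nonneg _)
    refine h2.congr fun n => ?_
    rw [tsum_fintype]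
    simp only [Finset.sum_const, Finset.card_univ, Fintype.card_coe,
      Finset.Nat.card_antidiagonal, nsmul_eq_mul]
    push_cast; ring

theorem stmt_3_aux :
    HasSum (fun n : ℕ => dtail lam 1 (n + 1)) (1 - lam / (1 + lam) * dexp lam 1) := by
  set f₂ : ℕ × ℕ → ℝ := fun p => aa lam (p.1 + p.2 + 2) with hf₂def
  have hf2 : Summable f₂ := summable_f2 lam hl
  set s := ∑' p, f₂ p with hsdef
  have hs : HasSum f₂ s := hf2.hasSum
  have fib : ∀ n : ℕ, HasSum (fun k => f₂ (n, k)) (dtail lam 1 (n + 1)) := by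
    intro n
    have h1 : Summable (fun k => aa lam (k + (n + 2))) :=
      (summable_nat_add_iff (n + 2)).mpr (summable_aa lam hl)
    have h2 := Summable.sum_add_tsum_nat_add (f := aa lam) (n + 2) (summable_aa lam hl)
    have hdt : dtail lam 1 (n + 1) = dexp lam 1 - ∑ k ∈ Finset.range (n + 2), aa lam k := by
      unfold dtail aa; simp
    have h3 : (∑' k, aa lam (k + (n + 2))) = dtail lam 1 (n + 1) := by
      rw [hdt, dexp_eq lam]; linarith [h2]
    have h4 : HasSum (fun k => aa lam (k + (n + 2))) (dtail lam 1 (n + 1)) := h3 ▸ h1.hasSum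
    exact h4.congr_fun fun k => by simp only [hf₂def]; rw [show k + (n + 2) = n + k + 2 by ring]
  have hmain : HasSum (fun n : ℕ => dtail lam 1 (n + 1)) s := hs.prod_fiberwise fib
  -- compute s via antidiagonal slicing
  have hsig : HasSum (f₂ ∘ (Finset.HasAntidiagonal.sigmaAntidiagonalEquivProd (A := ℕ))) s :=
    (Equiv.hasSum_iff _).mpr hs
  have fib2 : ∀ n : ℕ, HasSum
      (fun y : (Finset.HasAntidiagonal.antidiagonal n : Finset (ℕ × ℕ)) =>
        (f₂ ∘ (Finset.HasAntidiagonal.sigmaAntidiagonalEquivProd (A := ℕ))) ⟨n, y⟩)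
      (((n : ℝ) + 1) * aa lam (n + 2)) := by
    intro n
    have hconst : ∀ y : (Finset.HasAntidiagonal.antidiagonal n : Finset (ℕ × ℕ)),
        (f₂ ∘ (Finset.HasAntidiagonal.sigmaAntidiagonalEquivProd (A := ℕ))) ⟨n, y⟩ = aa lam (n + 2) := by
      rintro ⟨p, hp⟩
      rw [Finset.HasAntidiagonal.mem_antidiagonal] at hp
      simp [hf₂def, Finset.HasAntidiagonal.sigmaAntidiagonalEquivProd, hp]
    have h := hasSum_fintype (fun _y : (Finset.HasAntidiagonal.antidiagonal n : Finset (ℕ × ℕ)) => aa lam (n + 2))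
    have hv : ∑ _y : (Finset.HasAntidiagonal.antidiagonal n : Finset (ℕ × ℕ)), aa lam (n + 2)
        = ((n : ℝ) + 1) * aa lam (n + 2) := by
      simp only [Finset.sum_const, Finset.card_univ, Fintype.card_coe,
        Finset.Nat.card_antidiagonal, nsmul_eq_mul]
      push_cast; ring
    rw [hv] at h
    exact h.congr_fun hconst
  have hcomp : HasSum (fun n : ℕ => ((n : ℝ) + 1) * aa lam (n + 2)) s := hsig.sigma fib2
  have hval : s = dexp lam 1 / (1 + lam) - dexp lam 1 + 1 := hcomp.unique (hasSum_target lam hl)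
  have hne : (1 + lam) ≠ 0 := by
    have h := abs_lt.mp hl; intro h0; linarith [h.1, h.2]
  have hfinal : s = 1 - lam / (1 + lam) * dexp lam 1 := by
    rw [hval]; field_simp; ring
  rwa [hfinal] at hmain
end main



theorem stmt_3 (lam : ℝ) (hl : |lam| < 1) :
    HasSum (fun n : ℕ => dtail lam 1 (n + 1)) (1 - lam / (1 + lam) * dexp lam 1) := by
  exact stmt_3_aux lam hl
end
end

section
/- For every real λ with |λ| < 1, one has Σ_{n=1}^∞ (−1)^n T_n(1) = 1 − cosh_λ(1), where cosh_λ(x) = (e_λ(x) + e_λ(−x))/2 is the degenerate hyperbolic cosine and the series on the left converges. -/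
noncomputable section

theorem stmt_4 (lam : ℝ) (hl : |lam| < 1) :
    HasSum (fun n : ℕ => (-1 : ℝ) ^ (n + 1) * dtail lam 1 (n + 1))
      (1 - (dexp lam 1 + dexp lam (-1)) / 2) := by
  set a : ℕ → ℝ := fun k => dff lam 1 k / k.factorial with ha_def
  set r : ℝ := (1 + |lam|) / 2 with hr_def
  have hl0 : (0:ℝ) ≤ |lam| := abs_nonneg _
  have hr0 : 0 < r := by rw [hr_def]; linarith
  have hr1 : r < 1 := by rw [hr_def]; linarith
  have ha0 : a 0 = 1 := by simp [ha_def, dff]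
  have ha1 : a 1 = 1 := by simp [ha_def, dff]
  have harec : ∀ k : ℕ, a (k+1) = a k * (1 - k * lam) / (k+1) := by
    intro k
    have hf : (k.factorial : ℝ) ≠ 0 := Nat.cast_ne_zero.mpr k.factorial_ne_zero
    have hk : ((k:ℝ)+1) ≠ 0 := by positivity
    show dff lam 1 (k+1) / ((k+1).factorial : ℝ) = dff lam 1 k / k.factorial * (1 - k * lam) / (k+1)
    rw [dff, Finset.prod_range_succ, ← dff, div_mul_eq_mul_div, div_div]
    congr 1
    push_cast [Nat.factorial_succ]
    ring
  have hratio : ∀ k : ℕ, 1 ≤ k → |a (k+1)| ≤ r * |a k| := by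
    intro k hk
    have hk1 : (1:ℝ) ≤ (k:ℝ) := by exact_mod_cast hk
    have h1 : |1 - (k:ℝ) * lam| ≤ r * ((k:ℝ)+1) := by
      calc |1 - (k:ℝ)*lam| ≤ |(1:ℝ)| + |(k:ℝ)*lam| := abs_sub _ _
        _ = 1 + (k:ℝ) * |lam| := by
            rw [abs_one, abs_mul, abs_of_nonneg (by linarith : (0:ℝ) ≤ (k:ℝ))]
        _ ≤ r * ((k:ℝ)+1) := by rw [hr_def]; nlinarith
    have hkpos : (0:ℝ) < (k:ℝ)+1 := by linarith
    rw [harec k, abs_div, abs_mul, abs_of_pos hkpos, div_le_iff₀ hkpos]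
    calc |a k| * |1 - (k:ℝ)*lam| ≤ |a k| * (r * ((k:ℝ)+1)) :=
          mul_le_mul_of_nonneg_left h1 (abs_nonneg _)
      _ = r * |a k| * ((k:ℝ)+1) := by ring
  have habs : ∀ k : ℕ, |a (k+1)| ≤ r ^ k := by
    intro k
    induction k with
    | zero => simp [ha1]
    | succ n ih =>
        calc |a (n+2)| ≤ r * |a (n+1)| := hratio (n+1) (by omega)
          _ ≤ r * r ^ n := by nlinarith
          _ = r ^ (n+1) := by ring
  have hsum : Summable a := by
    apply summable_of_ratio_norm_eventually_le hr1
    filter_upwards [Filter.eventually_ge_atTop 1] with k hk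
    simpa [Real.norm_eq_abs] using hratio k hk
  have hsumabs : Summable (fun k => |a k|) := hsum.abs
  have hd1 : dexp lam 1 = ∑' k, a k := by simp [dexp, ha_def]
  have hE1 : HasSum a (dexp lam 1) := by rw [hd1]; exact hsum.hasSum
  have hsumB : Summable (fun k => dff lam 1 k * (-1:ℝ)^k / k.factorial) := by
    rw [← summable_abs_iff]
    have : (fun k => |dff lam 1 k * (-1:ℝ)^k / k.factorial|) = fun k => |a k| := by
      funext k
      rw [ha_def]
      rw [abs_div, abs_div, abs_mul, abs_pow, abs_neg, abs_one, one_pow, mul_one]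
    rw [this]; exact hsumabs
  have hE2 : HasSum (fun k => dff lam 1 k * (-1:ℝ)^k / k.factorial) (dexp lam (-1)) := by
    rw [dexp]; exact hsumB.hasSum
  -- even part
  have hg : HasSum (fun k => (a k + dff lam 1 k * (-1:ℝ)^k / k.factorial) / 2)
      ((dexp lam 1 + dexp lam (-1)) / 2) := (hE1.add hE2).div_const 2
  have hinj : Function.Injective (fun k : ℕ => 2 * k) := fun x y h => by dsimp at h; omega
  have hz : ∀ x ∉ Set.range (fun k : ℕ => 2 * k),
      (a x + dff lam 1 x * (-1:ℝ)^x / x.factorial) / 2 = 0 := by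
    intro x hx
    have hodd : Odd x := by
      rcases Nat.even_or_odd x with he | ho
      · obtain ⟨m, hm⟩ := he
        exact absurd ⟨m, by dsimp; omega⟩ hx
      · exact ho
    have hneg : (-1:ℝ)^x = -1 := hodd.neg_one_pow
    rw [hneg, ha_def]
    ring
  have heven : HasSum (fun k => a (2*k)) ((dexp lam 1 + dexp lam (-1)) / 2) := by
    have h := (Function.Injective.hasSum_iff hinj hz).mpr hg
    have hkey : ∀ k : ℕ,
        ((fun k => (a k + dff lam 1 k * (-1:ℝ)^k / k.factorial) / 2) ∘ (fun k : ℕ => 2*k)) k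
          = a (2*k) := by
      intro k
      simp only [Function.comp_apply, pow_mul, neg_one_sq, one_pow, mul_one, ha_def]
      ring
    rwa [funext hkey] at h
  have hsh : HasSum (fun n => a (2*(n+1)))
      ((dexp lam 1 + dexp lam (-1)) / 2 - 1) := by
    have h := (hasSum_nat_add_iff' (f := fun k => a (2*k)) 1).mpr heven
    simpa [ha0] using h
  have h4 : HasSum (fun k => -a (2*k+2)) (1 - (dexp lam 1 + dexp lam (-1)) / 2) := by
    have h := hsh.neg
    simpa [mul_add, neg_sub] using h
  -- tails
  have hT : ∀ n : ℕ, dtail lam 1 n = ∑' j, a (j + (n+1)) := by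
    intro n
    have h := Summable.sum_add_tsum_nat_add (n+1) hsum
    have hps : (∑ k ∈ Finset.range (n+1), dff lam 1 k * 1^k / k.factorial)
        = ∑ k ∈ Finset.range (n+1), a k := by simp [ha_def]
    rw [dtail, hps, hd1, ← h]
    ring
  have hTb : ∀ n : ℕ, |dtail lam 1 n| ≤ r ^ n / (1 - r) := by
    intro n
    rw [hT n]
    have hs1 : Summable fun j => |a (j + (n+1))| :=
      (summable_nat_add_iff (f := fun k => |a k|) (n+1)).mpr hsumabs
    have hg2 : Summable fun j : ℕ => r ^ n * r ^ j :=
      (summable_geometric_of_lt_one hr0.le hr1).mul_left _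
    have habs1 : |∑' j, a (j + (n+1))| ≤ ∑' j, |a (j + (n+1))| := by
      have h := norm_tsum_le_tsum_norm (f := fun j => a (j + (n+1)))
        (by simpa only [Real.norm_eq_abs] using hs1)
      simpa only [Real.norm_eq_abs] using h
    calc |∑' j, a (j + (n+1))| ≤ ∑' j, |a (j + (n+1))| := habs1
      _ ≤ ∑' j : ℕ, r ^ n * r ^ j := by
          refine Summable.tsum_le_tsum (fun j => ?_) hs1 hg2
          have : j + (n+1) = (j + n) + 1 := by omega
          rw [this]
          calc |a ((j+n)+1)| ≤ r ^ (j+n) := habs (j+n)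
            _ = r ^ n * r ^ j := by rw [pow_add]; ring
      _ = r ^ n / (1 - r) := by
          rw [tsum_mul_left, tsum_geometric_of_lt_one hr0.le hr1, div_eq_mul_inv]
  set F : ℕ → ℝ := fun n => (-1:ℝ)^(n+1) * dtail lam 1 (n+1) with hF_def
  have hFb : ∀ n : ℕ, |F n| ≤ (1/(1-r)) * r ^ (n+1) := by
    intro n
    rw [hF_def]
    calc |(-1:ℝ)^(n+1) * dtail lam 1 (n+1)| = |dtail lam 1 (n+1)| := by
          rw [abs_mul, abs_pow, abs_neg, abs_one, one_pow, one_mul]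
      _ ≤ r ^ (n+1) / (1-r) := hTb (n+1)
      _ = (1/(1-r)) * r ^ (n+1) := by ring
  have hr2 : r^2 < 1 := by nlinarith
  have hgeo2 : Summable fun k : ℕ => (r^2) ^ k :=
    summable_geometric_of_lt_one (by positivity) hr2
  have hAs : Summable fun k => F (2*k) := by
    refine Summable.of_norm_bounded (g := fun k => ((1/(1-r)) * r) * (r^2) ^ k)
      (hgeo2.mul_left _) (fun k => ?_)
    calc ‖F (2*k)‖ ≤ (1/(1-r)) * r ^ (2*k+1) := hFb (2*k)
      _ = ((1/(1-r)) * r) * (r^2) ^ k := by rw [pow_succ, pow_mul]; ring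
  have hBs : Summable fun k => F (2*k+1) := by
    refine Summable.of_norm_bounded (g := fun k => ((1/(1-r)) * r^2) * (r^2) ^ k)
      (hgeo2.mul_left _) (fun k => ?_)
    calc ‖F (2*k+1)‖ ≤ (1/(1-r)) * r ^ (2*k+2) := hFb (2*k+1)
      _ = ((1/(1-r)) * r^2) * (r^2) ^ k := by
          rw [show 2*k+2 = 2*(k+1) by ring, pow_mul, pow_succ]; ring
  have hA : HasSum (fun k => F (2*k)) (∑' k, F (2*k)) := hAs.hasSum
  have hB : HasSum (fun k => F (2*k+1)) (∑' k, F (2*k+1)) := hBs.hasSum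
  have hdiff : ∀ n : ℕ, dtail lam 1 n - dtail lam 1 (n+1) = a (n+1) := by
    intro n
    rw [dtail, dtail, Finset.sum_range_succ (n := n+1)]
    simp [ha_def]
  have hkey2 : ∀ k : ℕ, F (2*k) + F (2*k+1) = -a (2*k+2) := by
    intro k
    have hodd : (-1:ℝ)^(2*k+1) = -1 := Odd.neg_one_pow ⟨k, by ring⟩
    have heven' : (-1:ℝ)^(2*k+1+1) = 1 := by
      rw [pow_succ, hodd]; ring
    rw [hF_def]
    simp only [hodd, heven']
    have := hdiff (2*k+1)
    have h2 : 2*k+1+1 = 2*k+2 := by ring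
    rw [h2] at this ⊢
    linarith
  have hAB : HasSum (fun k => -a (2*k+2)) ((∑' k, F (2*k)) + ∑' k, F (2*k+1)) := by
    have h := hA.add hB
    rwa [funext hkey2] at h
  have hval : (∑' k, F (2*k)) + (∑' k, F (2*k+1))
      = 1 - (dexp lam 1 + dexp lam (-1)) / 2 := hAB.unique h4
  have hfin := hA.even_add_odd hB
  rwa [hval] at hfin
end
end

section
/- For every natural number p, every real λ, and every real y with |λy| < 1, one has Σ_{n=0}^∞ C(n,p) T_n(y) = (y^{p+1}/(p+1)!) (1)_{p+1,λ} (1+λy)^{−(p+1)} e_λ(y), where C(n,p) is the binomial coefficient and the series on the left converges. -/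
noncomputable section

lemma dff_succ (lam x : ℝ) (n : ℕ) : dff lam x (n+1) = dff lam x n * (x - n*lam) :=
  Finset.prod_range_succ _ _

lemma dff_succ' (lam x : ℝ) (n : ℕ) : dff lam x (n+1) = x * dff lam (x - lam) n := by
  rw [dff, Finset.prod_range_succ']
  simp only [Nat.cast_zero, zero_mul, sub_zero]
  rw [dff, mul_comm]
  congr 1
  apply Finset.prod_congr rfl
  intro i _
  push_cast
  ring

lemma dff_add (lam x : ℝ) (m n : ℕ) :
    dff lam x (m + n) = dff lam x m * dff lam (x - m*lam) n := by
  rw [dff, Finset.prod_range_add, dff, dff]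
  congr 1
  apply Finset.prod_congr rfl
  intro i _
  push_cast
  ring

lemma summable_dff' (q : ℕ) (lam x y : ℝ) (hy : |lam * y| < 1) :
    Summable (fun m : ℕ => (m.choose q : ℝ) * dff lam x m * y ^ m / m.factorial) := by
  set r : ℝ := (1 + |lam * y|)/2 with hrdef
  have hr1 : r < 1 := by rw [hrdef]; linarith
  have hrly : |lam * y| < r := by rw [hrdef]; linarith [abs_nonneg (lam*y)]
  have hr0 : 0 < r := lt_of_le_of_lt (abs_nonneg _) hrly
  apply summable_of_ratio_norm_eventually_le hr1
  have h1 : ∀ᶠ m : ℕ in Filter.atTop, ((|x| * |y| + r * q + r) / (r - |lam * y|) : ℝ) ≤ (m:ℝ) :=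
    tendsto_natCast_atTop_atTop.eventually_ge_atTop _
  filter_upwards [h1, Filter.eventually_ge_atTop q] with m hm hmq
  -- key inequality: |x - m*lam| * |y| ≤ r * (m + 1 - q)
  have hsub : ((m + 1 - q : ℕ) : ℝ) = (m:ℝ) + 1 - q := by
    have : q ≤ m + 1 := by omega
    push_cast [Nat.cast_sub this]; ring
  have key : |x - m*lam| * |y| ≤ r * ((m:ℝ) + 1 - q) := by
    have h2 : |x - m*lam| ≤ |x| + (m:ℝ) * |lam| := by
      calc |x - (m:ℝ)*lam| ≤ |x| + |(m:ℝ)*lam| := abs_sub _ _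
        _ = |x| + (m:ℝ) * |lam| := by rw [abs_mul, Nat.abs_cast]
    have h2' : |x - m*lam| * |y| ≤ |x| * |y| + (m:ℝ) * |lam * y| := by
      have := mul_le_mul_of_nonneg_right h2 (abs_nonneg y)
      rw [abs_mul]; nlinarith [abs_nonneg y, abs_nonneg lam]
    have hd : 0 < r - |lam * y| := by linarith
    have h5 : (|x| * |y| + r * q + r) ≤ (m:ℝ) * (r - |lam * y|) := by
      rw [div_le_iff₀ hd] at hm; linarith [hm]
    nlinarith
  -- now the ratio bound
  have fact_pos : (0:ℝ) < (m.factorial : ℝ) := by positivity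
  have hchoose : ((m.choose q : ℕ):ℝ) * ((m:ℝ)+1) = ((m+1).choose q : ℝ) * ((m:ℝ)+1-q) := by
    have := Nat.choose_mul_succ_eq m q
    have h4 : ((m.choose q * (m+1) : ℕ) : ℝ) = (((m+1).choose q * (m+1-q) : ℕ) : ℝ) := by
      exact_mod_cast congrArg (Nat.cast : ℕ → ℝ) this
    push_cast at h4
    rw [hsub] at h4
    linarith [h4]
  simp only [Real.norm_eq_abs]
  rw [dff_succ]
  have e1 : |(((m+1).choose q : ℕ):ℝ) * (dff lam x m * (x - m*lam)) * y^(m+1) / (m+1).factorial|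
      = ((m+1).choose q : ℝ) * |dff lam x m| * (|x - m*lam| * |y|) * |y|^m / ((((m:ℝ)+1)) * m.factorial) := by
    rw [abs_div, abs_mul, abs_mul, abs_mul, pow_succ, abs_mul, abs_pow]
    rw [Nat.factorial_succ]
    push_cast
    rw [abs_of_nonneg (by positivity : (0:ℝ) ≤ (((m:ℝ)+1) * m.factorial)),
        abs_of_nonneg (by positivity : (0:ℝ) ≤ (((m+1).choose q : ℕ):ℝ))]
    ring
  rw [e1]
  have e2 : r * |((m.choose q : ℕ):ℝ) * dff lam x m * y^m / m.factorial|
      = r * ((m.choose q:ℕ):ℝ) * |dff lam x m| * |y|^m / m.factorial := by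
    rw [abs_div, abs_mul, abs_mul, abs_pow, Nat.abs_cast,
        abs_of_nonneg (le_of_lt fact_pos)]
    ring
  rw [e2]
  rw [div_le_div_iff₀ (by positivity) fact_pos]
  have main : ((m+1).choose q : ℝ) * (|x - m*lam| * |y|) ≤ r * ((m.choose q:ℕ):ℝ) * ((m:ℝ)+1) := by
    calc ((m+1).choose q : ℝ) * (|x - m*lam| * |y|) ≤ ((m+1).choose q : ℝ) * (r * ((m:ℝ)+1-q)) := by
          apply mul_le_mul_of_nonneg_left key (by positivity)
      _ = r * (((m+1).choose q : ℝ) * ((m:ℝ)+1-q)) := by ring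
      _ = r * (((m.choose q:ℕ):ℝ) * ((m:ℝ)+1)) := by rw [← hchoose]
      _ = r * ((m.choose q:ℕ):ℝ) * ((m:ℝ)+1) := by ring
  nlinarith [abs_nonneg (dff lam x m), pow_nonneg (abs_nonneg y) m, fact_pos,
    mul_le_mul_of_nonneg_right main (mul_nonneg (abs_nonneg (dff lam x m)) (pow_nonneg (abs_nonneg y) m))]

lemma summable_dff (lam x y : ℝ) (hy : |lam * y| < 1) :
    Summable (fun m : ℕ => dff lam x m * y ^ m / m.factorial) := by
  have := summable_dff' 0 lam x y hy
  simpa using this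

lemma step_id (lam x y : ℝ) (hy : |lam * y| < 1) :
    HasSum (fun m : ℕ => dff lam x m * y ^ m / m.factorial)
      ((1 + lam*y) * ∑' m : ℕ, dff lam (x - lam) m * y ^ m / m.factorial) := by
  set b : ℕ → ℝ := fun m => dff lam (x-lam) m * y ^ m / m.factorial with hb
  set S : ℝ := ∑' m : ℕ, b m with hS
  have hsb : Summable b := summable_dff lam (x-lam) y hy
  have hSb : HasSum b S := hsb.hasSum
  have h1 : HasSum (fun m => lam * y * b m) (lam*y*S) := hSb.mul_left _
  set f : ℕ → ℝ := fun m => if m = 0 then 0 else lam*y*b (m-1) with hf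
  have h2 : HasSum f (lam*y*S) := by
    have h3 : HasSum (fun n : ℕ => f (n+1)) (lam*y*S) := by simpa [hf] using h1
    have h4 := (hasSum_nat_add_iff (f := f) 1).mp h3
    simpa [hf] using h4
  have h5 := hSb.add h2
  have h6 : (fun m => b m + f m) = fun m : ℕ => dff lam x m * y ^ m / m.factorial := by
    funext m
    match m with
    | 0 => simp [hf, hb, dff]
    | n+1 =>
      simp only [hf, hb, Nat.succ_ne_zero, if_false, Nat.add_sub_cancel]
      rw [dff_succ, dff_succ']
      have hfac : ((n+1).factorial : ℝ) = ((n:ℝ)+1) * n.factorial := by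
        rw [Nat.factorial_succ]; push_cast; ring
      have hn0 : (n.factorial : ℝ) ≠ 0 := by positivity
      have hn1 : ((n:ℝ)+1) ≠ 0 := by positivity
      field_simp [hfac]
      rw [hfac]
      ring
  rw [h6] at h5
  convert h5 using 1
  ring

lemma iterate_id (lam y : ℝ) (hy : |lam * y| < 1) (k : ℕ) :
    (∑' m : ℕ, dff lam 1 m * y ^ m / m.factorial)
      = (1 + lam*y)^k * ∑' m : ℕ, dff lam (1 - k*lam) m * y ^ m / m.factorial := by
  induction k with
  | zero => norm_num
  | succ k ih =>
    rw [ih]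
    have h1 : (1 : ℝ) - (k:ℝ)*lam - lam = 1 - ((k:ℕ)+1:ℝ)*lam := by ring
    have h2 := (step_id lam (1 - k*lam) y hy).tsum_eq
    rw [h2, h1]
    push_cast
    ring

lemma hockey (p k : ℕ) : ∑ n ∈ Finset.range k, n.choose p = k.choose (p+1) := by
  induction k with
  | zero => simp
  | succ k ih => rw [Finset.sum_range_succ, ih, Nat.choose_succ_succ']; omega

lemma weighted (p : ℕ) (lam y : ℝ) (hy : |lam * y| < 1) :
    HasSum (fun k : ℕ => (k.choose (p+1) : ℝ) * dff lam 1 k * y ^ k / k.factorial)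
      (y ^ (p + 1) / (p + 1).factorial * dff lam 1 (p + 1) *
        (1 + lam * y) ^ (-(p + 1 : ℤ)) * dexp lam y) := by
  set h : ℕ → ℝ := fun k => (k.choose (p+1) : ℝ) * dff lam 1 k * y ^ k / k.factorial with hh
  set g : ℕ → ℝ := fun m => dff lam (1 - (p+1)*lam) m * y ^ m / m.factorial with hg
  set S : ℝ := ∑' m, g m with hS
  have hpos : (0:ℝ) < 1 + lam * y := by
    have := neg_abs_le (lam*y); linarith
  have hgsum : HasSum g S := (summable_dff lam _ y hy).hasSum
  set c : ℝ := y ^ (p + 1) / (p + 1).factorial * dff lam 1 (p + 1) with hc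
  have h1 : HasSum (fun n => c * g n) (c * S) := hgsum.mul_left c
  have heq : (fun n : ℕ => h (n + (p+1))) = fun n => c * g n := by
    funext n
    have hb : p + 1 ≤ n + (p+1) := by omega
    have hkey : ((n + (p+1)).choose (p+1) : ℕ) * (p+1).factorial * n.factorial
        = (n + (p+1)).factorial := by
      have := Nat.choose_mul_factorial_mul_factorial hb
      simpa using this
    have hkey' : (((n + (p+1)).choose (p+1) : ℕ) : ℝ) * (p+1).factorial * n.factorial
        = ((n + (p+1)).factorial : ℝ) := by exact_mod_cast congrArg (Nat.cast : ℕ → ℝ) hkey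
    have hdff : dff lam 1 (n + (p+1)) = dff lam 1 (p+1) * dff lam (1 - (p+1)*lam) n := by
      rw [add_comm n (p+1), dff_add]
      push_cast
      ring_nf
    have f1 : ((n + (p+1)).factorial : ℝ) ≠ 0 := by positivity
    have f2 : ((p+1).factorial : ℝ) ≠ 0 := by positivity
    have f3 : (n.factorial : ℝ) ≠ 0 := by positivity
    simp only [hh, hg, hc, hdff]
    rw [pow_add]
    field_simp
    rw [← hkey']
    ring
  have h2 : HasSum (fun n : ℕ => h (n + (p+1))) (c * S) := by rw [heq]; exact h1
  have h3 := (hasSum_nat_add_iff (f := h) (p+1)).mp h2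
  have h4 : ∑ i ∈ Finset.range (p+1), h i = 0 := by
    apply Finset.sum_eq_zero
    intro i hi
    have : i.choose (p+1) = 0 := Nat.choose_eq_zero_of_lt (Finset.mem_range.mp hi)
    simp [hh, this]
  rw [h4, add_zero] at h3
  have h5 : dexp lam y = (1 + lam*y)^(p+1) * S := by
    rw [dexp, iterate_id lam y hy (p+1), hS, hg]
    norm_num
  have h6 : c * S = y ^ (p + 1) / (p + 1).factorial * dff lam 1 (p + 1) *
      (1 + lam * y) ^ (-(p + 1 : ℤ)) * dexp lam y := by
    rw [h5, hc, zpow_neg]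
    have hz : ((1+lam*y):ℝ) ^ ((p:ℤ)+1) = (1+lam*y)^(p+1) := by
      rw [show ((p:ℤ)+1) = ((p+1:ℕ):ℤ) by push_cast; ring, zpow_natCast]
    rw [hz]
    have : ((1 + lam*y)^(p+1) : ℝ) ≠ 0 := by positivity
    field_simp
  rwa [h6] at h3

theorem stmt_5 (p : ℕ) (lam y : ℝ) (hy : |lam * y| < 1) :
    HasSum (fun n : ℕ => (n.choose p : ℝ) * dtail lam y n)
      (y ^ (p + 1) / (p + 1).factorial * dff lam 1 (p + 1) *
        (1 + lam * y) ^ (-(p + 1 : ℤ)) * dexp lam y) := by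
  set a : ℕ → ℝ := fun k => dff lam 1 k * y ^ k / k.factorial with ha
  set T : ℝ := y ^ (p + 1) / (p + 1).factorial * dff lam 1 (p + 1) *
        (1 + lam * y) ^ (-(p + 1 : ℤ)) * dexp lam y with hT
  set U : ℕ × ℕ → ℝ := fun nk => (nk.1.choose p : ℝ) * (if nk.1 < nk.2 then a nk.2 else 0)
    with hU
  have hW := weighted p lam y hy
  have hWsummable : Summable (fun k : ℕ => (k.choose (p+1) : ℝ) * dff lam 1 k * y ^ k / k.factorial) :=
    hW.summable
  -- Summability of U via its swap
  set V : ℕ × ℕ → ℝ := fun kn => |U (kn.2, kn.1)| with hV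
  have hVnn : 0 ≤ V := fun kn => abs_nonneg _
  have hVfiber : ∀ k : ℕ, Summable fun n => V (k, n) := by
    intro k
    apply summable_of_ne_finset_zero (s := Finset.range k)
    intro n hn
    have : ¬ n < k := fun h => hn (Finset.mem_range.mpr h)
    simp [hV, hU, this]
  have hVrow : ∀ k : ℕ, (∑' n, V (k, n)) = (k.choose (p+1) : ℝ) * |a k| := by
    intro k
    have := tsum_eq_sum (L := SummationFilter.unconditional ℕ) (f := fun n => V (k, n)) (s := Finset.range k) ?_
    · rw [this]
      have : ∀ n ∈ Finset.range k, V (k, n) = (n.choose p : ℝ) * |a k| := by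
        intro n hn
        have hnk : n < k := Finset.mem_range.mp hn
        simp [hV, hU, hnk, abs_mul, Nat.abs_cast]
      rw [Finset.sum_congr rfl this, ← Finset.sum_mul]
      congr 1
      rw [← Nat.cast_sum]
      exact_mod_cast congrArg (Nat.cast : ℕ → ℝ) (hockey p k)
    · intro n hn
      have : ¬ n < k := fun h => hn (Finset.mem_range.mpr h)
      simp [hV, hU, this]
  have hVsum : Summable V := by
    rw [summable_prod_of_nonneg hVnn]
    refine ⟨hVfiber, ?_⟩
    have : (fun k => ∑' n, V (k, n)) = fun k => (k.choose (p+1) : ℝ) * |a k| := funext hVrow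
    rw [this]
    have h1 : Summable (fun k => |(k.choose (p+1) : ℝ) * dff lam 1 k * y ^ k / k.factorial|) :=
      hWsummable.abs
    apply h1.congr
    intro k
    simp only [ha, abs_div, abs_mul, Nat.abs_cast]
    ring
  have hUsum : Summable U := by
    apply Summable.of_norm
    have h2 : Summable (V ∘ (Equiv.prodComm ℕ ℕ)) :=
      ((Equiv.prodComm ℕ ℕ).summable_iff).mpr hVsum
    apply h2.congr
    intro nk
    simp [hV, Function.comp, Real.norm_eq_abs, Equiv.prodComm]
  have hUhas : HasSum U (∑' nk, U nk) := hUsum.hasSum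
  -- fiberwise along n
  have hahas : HasSum a (dexp lam y) := (summable_dff lam 1 y hy).hasSum
  have hfiber1 : ∀ n : ℕ, HasSum (fun k => U (n, k)) ((n.choose p : ℝ) * dtail lam y n) := by
    intro n
    have hfin : HasSum (fun k : ℕ => if k < n + 1 then a k else 0)
        (∑ k ∈ Finset.range (n+1), a k) := by
      have := hasSum_sum_of_ne_finset_zero (L := SummationFilter.unconditional ℕ) (f := fun k : ℕ => if k < n + 1 then a k else 0)
        (s := Finset.range (n+1)) ?_
      · convert this using 1
        apply Finset.sum_congr rfl
        intro k hk
        simp [Finset.mem_range.mp hk]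
      · intro k hk
        have hnk : ¬ k < n + 1 := fun h => hk (Finset.mem_range.mpr h)
        simp [hnk]
    have hsub := hahas.sub hfin
    have heq2 : (fun k => a k - if k < n + 1 then a k else 0) = fun k => if n < k then a k else 0 := by
      funext k
      by_cases hk : k < n + 1
      · have : ¬ n < k := by omega
        simp [hk, this]
      · have : n < k := by omega
        simp [hk, this]
    rw [heq2] at hsub
    have := hsub.mul_left ((n.choose p : ℝ))
    exact this
  have goal1 : HasSum (fun n : ℕ => (n.choose p : ℝ) * dtail lam y n) (∑' nk, U nk) :=
    hUhas.prod_fiberwise hfiber1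
  -- identify the sum via the swapped fibration
  have hUswap : HasSum (fun kn : ℕ × ℕ => U (kn.2, kn.1)) (∑' nk, U nk) := by
    exact ((Equiv.prodComm ℕ ℕ).hasSum_iff (f := U) (a := ∑' nk, U nk)).mpr hUhas
  have hfiber2 : ∀ k : ℕ, HasSum (fun n => U (n, k)) ((k.choose (p+1) : ℝ) * a k) := by
    intro k
    have hfs := hasSum_sum_of_ne_finset_zero (L := SummationFilter.unconditional ℕ) (f := fun n => U (n, k)) (s := Finset.range k) ?_
    · convert hfs using 1
      have : ∀ n ∈ Finset.range k, U (n, k) = (n.choose p : ℝ) * a k := by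
        intro n hn
        simp [hU, Finset.mem_range.mp hn]
      rw [Finset.sum_congr rfl this, ← Finset.sum_mul, ← Nat.cast_sum, hockey p k]
    · intro n hn
      have : ¬ n < k := fun h => hn (Finset.mem_range.mpr h)
      simp [hU, this]
  have goal2 : HasSum (fun k : ℕ => (k.choose (p+1) : ℝ) * a k) (∑' nk, U nk) :=
    hUswap.prod_fiberwise hfiber2
  have hWT : HasSum (fun k : ℕ => (k.choose (p+1) : ℝ) * a k) T :=
    hW.congr_fun (fun k => by simp only [ha]; ring)
  have hfin2 : (∑' nk, U nk) = T := goal2.unique hWT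
  rwa [hfin2] at goal1
end
end

section
/- For every natural number p, every real λ, and every real y with |λy| < 1, one has Σ_{n=0}^∞ (n)_{p,λ} T_n(y) = Σ_{k=0}^p S_{2,λ}(p,k) (y^{k+1}/(k+1)) (1)_{k+1,λ} (1+λy)^{−(k+1)} e_λ(y), where the series on the left converges. -/
noncomputable section

/-- Degenerate Stirling number of the second kind
`S_{2,λ}(n,k) = (1/k!) ∑_{j=0}^k (-1)^{k-j} C(k,j) (j)_{n,λ}`. -/
def dStirling (lam : ℝ) (n k : ℕ) : ℝ :=
  (1 / (k.factorial : ℝ)) *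
    ∑ j ∈ Finset.range (k + 1), (-1 : ℝ) ^ (k - j) * (k.choose j : ℝ) * dff lam j n

namespace Aux

open Finset

lemma dff_zero (lam x : ℝ) : dff lam x 0 = 1 := by simp [dff]

lemma dff_succ (lam x : ℝ) (n : ℕ) : dff lam x (n + 1) = dff lam x n * (x - n * lam) := by
  simp [dff, Finset.prod_range_succ]

lemma dff_succ' (lam x : ℝ) (n : ℕ) : dff lam x (n + 1) = x * dff lam (x - lam) n := by
  rw [dff, dff, Finset.prod_range_succ']
  simp only [Nat.cast_zero, zero_mul, sub_zero]
  rw [mul_comm]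
  congr 1
  refine Finset.prod_congr rfl fun i _ => ?_
  push_cast
  ring

lemma dff_add (lam x : ℝ) (n k : ℕ) :
    dff lam x (n + k) = dff lam x n * dff lam (x - n * lam) k := by
  induction k with
  | zero => simp [dff_zero]
  | succ k ih =>
      rw [← Nat.add_assoc, dff_succ, ih, dff_succ]
      push_cast
      ring

lemma ratio_bound (lam x y : ℝ) (hy : |lam * y| < 1) :
    ∃ N : ℕ, ∀ m ≥ N,
      |dff lam x (m + 1) * y ^ (m + 1) / (m + 1).factorial| ≤
        (1 + |lam * y|) / 2 * |dff lam x m * y ^ m / m.factorial| := by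
  set l : ℝ := (1 + |lam * y|) / 2 with hl
  have hl0 : 0 < l - |lam * y| := by
    have := abs_nonneg (lam * y); rw [hl]; linarith
  refine ⟨⌈|x| * |y| / (l - |lam * y|)⌉₊, fun m hm => ?_⟩
  have hNle : |x| * |y| ≤ (m : ℝ) * (l - |lam * y|) := by
    have h1 : |x| * |y| / (l - |lam * y|) ≤ (m : ℝ) := by
      calc |x| * |y| / (l - |lam * y|) ≤ (⌈|x| * |y| / (l - |lam * y|)⌉₊ : ℝ) := Nat.le_ceil _
        _ ≤ (m : ℝ) := by exact_mod_cast hm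
    calc |x| * |y| = |x| * |y| / (l - |lam * y|) * (l - |lam * y|) := by field_simp
      _ ≤ (m : ℝ) * (l - |lam * y|) := by
          exact mul_le_mul_of_nonneg_right h1 (le_of_lt hl0)
  have hkey : |x - m * lam| * |y| ≤ l * ((m : ℝ) + 1) := by
    have h2 : |x - m * lam| ≤ |x| + (m : ℝ) * |lam| := by
      calc |x - m * lam| ≤ |x| + |(m : ℝ) * lam| := abs_sub _ _
        _ = |x| + (m : ℝ) * |lam| := by
            rw [abs_mul, abs_of_nonneg (by positivity : (0:ℝ) ≤ (m:ℝ))]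
    calc |x - m * lam| * |y| ≤ (|x| + (m : ℝ) * |lam|) * |y| :=
          mul_le_mul_of_nonneg_right h2 (abs_nonneg _)
      _ = |x| * |y| + (m : ℝ) * |lam * y| := by rw [abs_mul]; ring
      _ ≤ (m : ℝ) * (l - |lam * y|) + (m : ℝ) * |lam * y| := by linarith
      _ = (m : ℝ) * l := by ring
      _ ≤ l * ((m : ℝ) + 1) := by nlinarith [hl0, abs_nonneg (lam * y), Nat.cast_nonneg (α := ℝ) m]
  have hfac : ((m + 1).factorial : ℝ) = ((m : ℝ) + 1) * (m.factorial : ℝ) := by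
    rw [Nat.factorial_succ]; push_cast; ring
  have hm1 : (0:ℝ) < (m : ℝ) + 1 := by positivity
  have hmf : (m.factorial : ℝ) ≠ 0 := by
    exact_mod_cast m.factorial_ne_zero
  have e1 : dff lam x (m + 1) * y ^ (m + 1) / (m + 1).factorial =
      (dff lam x m * y ^ m / m.factorial) * ((x - m * lam) * y / ((m : ℝ) + 1)) := by
    rw [dff_succ, hfac]
    field_simp
    ring
  rw [e1, abs_mul]
  have h3 : |(x - m * lam) * y / ((m : ℝ) + 1)| ≤ l := by
    rw [abs_div, abs_mul, abs_of_pos hm1, div_le_iff₀ hm1]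
    linarith [hkey]
  calc |dff lam x m * y ^ m / m.factorial| * |(x - m * lam) * y / ((m : ℝ) + 1)|
      ≤ |dff lam x m * y ^ m / m.factorial| * l :=
        mul_le_mul_of_nonneg_left h3 (abs_nonneg _)
    _ = l * |dff lam x m * y ^ m / m.factorial| := mul_comm _ _

lemma summable_c (lam x y : ℝ) (hy : |lam * y| < 1) :
    Summable (fun m : ℕ => dff lam x m * y ^ m / m.factorial) := by
  obtain ⟨N, hN⟩ := ratio_bound lam x y hy
  refine summable_of_ratio_norm_eventually_le (r := (1 + |lam * y|) / 2) (by linarith) ?_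
  refine Filter.eventually_atTop.2 ⟨N, fun m hm => ?_⟩
  simp only [Real.norm_eq_abs]
  exact hN m hm

lemma hasSum_dexp (lam y : ℝ) (hy : |lam * y| < 1) :
    HasSum (fun m : ℕ => dff lam 1 m * y ^ m / m.factorial) (dexp lam y) :=
  (summable_c lam 1 y hy).hasSum


lemma geom_bound (lam y : ℝ) (hy : |lam * y| < 1) :
    ∃ C : ℝ, 0 ≤ C ∧ ∀ m : ℕ,
      |dff lam 1 m * y ^ m / m.factorial| ≤ C * ((1 + |lam * y|) / 2) ^ m := by
  set l : ℝ := (1 + |lam * y|) / 2 with hldef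
  have hl0 : 0 < l := by have := abs_nonneg (lam * y); rw [hldef]; linarith
  obtain ⟨N, hN⟩ := ratio_bound lam 1 y hy
  set c : ℕ → ℝ := fun m => dff lam 1 m * y ^ m / m.factorial with hc
  refine ⟨∑ i ∈ Finset.range (N + 1), |c i| / l ^ i, ?_, ?_⟩
  · exact Finset.sum_nonneg fun i _ => by positivity
  · intro m
    induction m with
    | zero =>
        have h0 : |c 0| / l ^ 0 ≤ ∑ i ∈ Finset.range (N + 1), |c i| / l ^ i :=
          Finset.single_le_sum (f := fun i => |c i| / l ^ i)
            (fun i _ => by positivity) (Finset.mem_range.2 (Nat.succ_pos N))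
        rw [pow_zero, div_one] at h0
        simpa [hc] using h0
    | succ m ih =>
        by_cases hmN : m + 1 ≤ N
        · have h0 : |c (m+1)| / l ^ (m+1) ≤ ∑ i ∈ Finset.range (N + 1), |c i| / l ^ i :=
            Finset.single_le_sum (f := fun i => |c i| / l ^ i)
              (fun i _ => by positivity) (Finset.mem_range.2 (by omega))
          have hp : (0:ℝ) < l ^ (m+1) := by positivity
          calc |c (m+1)| = |c (m+1)| / l ^ (m+1) * l ^ (m+1) := by field_simp
            _ ≤ (∑ i ∈ Finset.range (N + 1), |c i| / l ^ i) * l ^ (m+1) :=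
                mul_le_mul_of_nonneg_right h0 (le_of_lt hp)
        · have hmN' : N ≤ m := by omega
          have := hN m hmN'
          calc |c (m+1)| ≤ l * |c m| := this
            _ ≤ l * ((∑ i ∈ Finset.range (N + 1), |c i| / l ^ i) * l ^ m) :=
                mul_le_mul_of_nonneg_left ih (le_of_lt hl0)
            _ = (∑ i ∈ Finset.range (N + 1), |c i| / l ^ i) * l ^ (m+1) := by ring

lemma hasSum_e_shift (lam y : ℝ) (hy : |lam * y| < 1) (k : ℕ) :
    HasSum (fun j : ℕ => dff lam (1 - (k : ℝ) * lam) j * y ^ j / j.factorial)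
      (dexp lam y * ((1 + lam * y) ^ k)⁻¹) := by
  have h1y : (1 : ℝ) + lam * y ≠ 0 := by
    have := neg_lt_of_abs_lt hy; linarith
  induction k with
  | zero => simpa using hasSum_dexp lam y hy
  | succ k ih =>
      set X : ℝ := 1 - (k : ℝ) * lam with hX
      have hXs : 1 - ((k : ℕ) + 1 : ℝ) * lam = X - lam := by rw [hX]; ring
      have hsum' : Summable (fun j : ℕ => dff lam (X - lam) j * y ^ j / j.factorial) :=
        summable_c lam (X - lam) y hy
      set S' : ℝ := ∑' j : ℕ, dff lam (X - lam) j * y ^ j / j.factorial with hS'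
      have h' : HasSum (fun j : ℕ => dff lam (X - lam) j * y ^ j / j.factorial) S' :=
        hsum'.hasSum
      set D : ℕ → ℝ := fun j => if j = 0 then 0 else
        lam * y * (dff lam (X - lam) (j - 1) * y ^ (j - 1) / (j - 1).factorial) with hD
      have hDsum : HasSum D (lam * y * S') := by
        have h2 : HasSum (fun j : ℕ => D (j + 1)) (lam * y * S') := by
          have hml := h'.mul_left (lam * y)
          have hfun : (fun j : ℕ => D (j + 1)) =
              fun j : ℕ => lam * y * (dff lam (X - lam) j * y ^ j / j.factorial) := by
            funext j; simp [hD]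
          rw [hfun]
          exact hml
        have h3 := (hasSum_nat_add_iff (f := D) 1).1 h2
        simpa [hD] using h3
      have hadd : HasSum (fun j : ℕ =>
          dff lam (X - lam) j * y ^ j / j.factorial + D j) (S' + lam * y * S') :=
        h'.add hDsum
      have hpt : ∀ j : ℕ, dff lam X j * y ^ j / j.factorial =
          dff lam (X - lam) j * y ^ j / j.factorial + D j := by
        intro j
        cases j with
        | zero => simp [dff_zero, hD]
        | succ j =>
            have hfac : ((j + 1).factorial : ℝ) = ((j : ℝ) + 1) * (j.factorial : ℝ) := by
              rw [Nat.factorial_succ]; push_cast; ring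
            have hjf : (j.factorial : ℝ) ≠ 0 := by exact_mod_cast j.factorial_ne_zero
            rw [dff_succ' lam X j, dff_succ lam (X - lam) j]
            simp only [hD, Nat.succ_ne_zero, if_false, Nat.add_sub_cancel]
            rw [hfac]
            field_simp
            ring
      have hXsum : HasSum (fun j : ℕ => dff lam X j * y ^ j / j.factorial)
          (S' * (1 + lam * y)) := by
        have he : S' * (1 + lam * y) = S' + lam * y * S' := by ring
        rw [he, funext hpt]
        exact hadd
      have hval : S' = dexp lam y * ((1 + lam * y) ^ (k + 1))⁻¹ := by
        have huniq : dexp lam y * ((1 + lam * y) ^ k)⁻¹ = S' * (1 + lam * y) :=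
          ih.unique hXsum
        have hne : (1 + lam * y) ^ k ≠ 0 := pow_ne_zero _ h1y
        have h2 : S' = dexp lam y * ((1 + lam * y) ^ k)⁻¹ * (1 + lam * y)⁻¹ := by
          rw [huniq]; field_simp
        rw [h2, pow_succ, mul_inv, ← mul_assoc]
      rw [← hval]
      have hfun : (fun j : ℕ => dff lam (1 - ((k : ℕ) + 1 : ℝ) * lam) j * y ^ j / j.factorial)
          = fun j : ℕ => dff lam (X - lam) j * y ^ j / j.factorial := by
        funext j; rw [hXs]
      push_cast
      rw [hfun]
      exact h'

lemma choose_id (k j : ℕ) (hj : j ≤ k) :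
    ((k : ℝ) + 1 - j) * ((k+1).choose j : ℝ) = ((k : ℝ) + 1) * (k.choose j : ℝ) := by
  have h1 : (k+1).choose (j+1) * (j+1) = (k+1).choose j * (k+1-j) := Nat.choose_succ_right_eq (k+1) j
  have h2 : (k+1) * k.choose j = (k+1).choose (j+1) * (j+1) := Nat.add_one_mul_choose_eq k j
  have h3 : (k+1).choose j * (k+1-j) = (k+1) * k.choose j := by omega
  have h4 : ((k+1).choose j : ℝ) * ((k+1-j : ℕ) : ℝ) = ((k:ℝ)+1) * (k.choose j : ℝ) := by
    exact_mod_cast congrArg (Nat.cast : ℕ → ℝ) h3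
  have h5 : ((k+1-j : ℕ) : ℝ) = (k:ℝ) + 1 - j := by
    have : j ≤ k + 1 := by omega
    push_cast [Nat.cast_sub this]
    ring
  rw [h5] at h4
  linarith [h4]

lemma stirling_rec (lam : ℝ) (p k : ℕ) :
    dStirling lam (p+1) (k+1) =
      dStirling lam p k + (((k:ℝ) + 1) - p * lam) * dStirling lam p (k+1) := by
  have key : ∑ j ∈ Finset.range (k+2), (-1:ℝ)^(k+1-j) * ((k+1).choose j : ℝ) * dff lam j (p+1)
      - (((k:ℝ)+1) - p*lam) *
        ∑ j ∈ Finset.range (k+2), (-1:ℝ)^(k+1-j) * ((k+1).choose j : ℝ) * dff lam j p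
      = ((k:ℝ)+1) * ∑ j ∈ Finset.range (k+1), (-1:ℝ)^(k-j) * (k.choose j : ℝ) * dff lam j p := by
    rw [Finset.mul_sum, ← Finset.sum_sub_distrib]
    have h1 : ∀ j ∈ Finset.range (k+2),
        (-1:ℝ)^(k+1-j) * ((k+1).choose j : ℝ) * dff lam j (p+1)
          - (((k:ℝ)+1) - p*lam) * ((-1:ℝ)^(k+1-j) * ((k+1).choose j : ℝ) * dff lam j p)
        = (-1:ℝ)^(k+1-j) * ((k+1).choose j : ℝ) * (((j:ℝ)) - ((k:ℝ)+1)) * dff lam j p := by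
      intro j _
      rw [dff_succ]
      ring
    rw [Finset.sum_congr rfl h1, Finset.sum_range_succ]
    simp only [Nat.cast_add, Nat.cast_one, sub_self, mul_zero, zero_mul, add_zero]
    rw [Finset.mul_sum]
    refine Finset.sum_congr rfl fun j hj => ?_
    have hjk : j ≤ k := by simpa [Nat.lt_succ_iff] using hj
    have hexp : k + 1 - j = (k - j) + 1 := by omega
    have hcid := choose_id k j hjk
    rw [hexp, pow_succ]
    linear_combination ((-1:ℝ)^(k-j) * dff lam (j:ℝ) p) * hcid
  have hA : (∑ j ∈ Finset.range (k+2), (-1:ℝ)^(k+1-j) * ((k+1).choose j : ℝ) * dff lam j (p+1))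
      = ((k:ℝ)+1) * ∑ j ∈ Finset.range (k+1), (-1:ℝ)^(k-j) * (k.choose j : ℝ) * dff lam j p
        + (((k:ℝ)+1) - p*lam) *
          ∑ j ∈ Finset.range (k+2), (-1:ℝ)^(k+1-j) * ((k+1).choose j:ℝ) * dff lam j p := by
    linarith [key]
  have hfac : ((k+1).factorial : ℝ) = ((k:ℝ)+1) * (k.factorial : ℝ) := by
    rw [Nat.factorial_succ]; push_cast; ring
  have hkf : (k.factorial : ℝ) ≠ 0 := by exact_mod_cast k.factorial_ne_zero
  have hk1 : ((k:ℝ)+1) ≠ 0 := by positivity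
  rw [dStirling, dStirling, dStirling, hA, hfac]
  field_simp

lemma dff_zero_arg (lam : ℝ) (q : ℕ) : dff lam 0 (q + 1) = 0 := by
  rw [dff_succ']; ring

lemma dStirling_zero_right (lam : ℝ) (q : ℕ) : dStirling lam q 0 = dff lam 0 q := by
  simp [dStirling]

lemma stirling_zero (lam : ℝ) : ∀ p k : ℕ, p < k → dStirling lam p k = 0 := by
  intro p
  induction p with
  | zero =>
      intro k hk
      obtain ⟨k', rfl⟩ : ∃ k', k = k' + 1 := ⟨k - 1, by omega⟩
      rw [dStirling]
      have hsum : ∑ j ∈ Finset.range (k' + 1 + 1),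
          (-1:ℝ)^(k' + 1 - j) * ((k'+1).choose j : ℝ) * dff lam j 0
          = ∑ j ∈ Finset.range (k' + 1 + 1), (-1:ℝ)^j * ((k'+1).choose j : ℝ) := by
        rw [← Finset.sum_range_reflect]
        refine Finset.sum_congr rfl fun j hj => ?_
        have hj' : j ≤ k' + 1 := by simpa [Nat.lt_succ_iff] using hj
        rw [dff]
        simp only [Finset.range_zero, Finset.prod_empty, mul_one]
        have h1 : k' + 1 + 1 - 1 - j = k' + 1 - j := by omega
        have h2 : k' + 1 - (k' + 1 - j) = j := by omega
        rw [h1, h2, Nat.choose_symm hj']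
      rw [hsum]
      have hz : ∑ j ∈ Finset.range (k' + 1 + 1), (-1:ℝ)^j * ((k'+1).choose j : ℝ) = 0 := by
        have := Int.alternating_sum_range_choose (n := k' + 1)
        rw [if_neg (Nat.succ_ne_zero k')] at this
        exact_mod_cast congrArg (Int.cast : ℤ → ℝ) this
      rw [hz, mul_zero]
  | succ p ih =>
      intro k hk
      obtain ⟨k', rfl⟩ : ∃ k', k = k' + 1 := ⟨k - 1, by omega⟩
      rw [stirling_rec, ih k' (by omega), ih (k' + 1) (by omega)]
      ring

lemma stirling_expand (lam : ℝ) (p : ℕ) (x : ℝ) :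
    ∑ k ∈ Finset.range (p + 1), dStirling lam p k * dff 1 x k = dff lam x p := by
  induction p generalizing x with
  | zero => simp [dStirling, dff_zero]
  | succ p ih =>
      rw [Finset.sum_range_succ']
      have hrec : ∀ k ∈ Finset.range (p + 1),
          dStirling lam (p+1) (k+1) * dff 1 x (k+1)
          = dStirling lam p k * dff 1 x (k+1)
            + (((k:ℝ)+1) - p*lam) * dStirling lam p (k+1) * dff 1 x (k+1) := by
        intro k _
        rw [stirling_rec]
        ring
      rw [Finset.sum_congr rfl hrec, Finset.sum_add_distrib]
      -- second sum: reindex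
      have hsec : ∑ k ∈ Finset.range (p + 1),
          (((k:ℝ)+1) - p*lam) * dStirling lam p (k+1) * dff 1 x (k+1)
          = ∑ k ∈ Finset.range (p + 2),
            (((k:ℝ)) - p*lam) * dStirling lam p k * dff 1 x k
            - ((0:ℝ) - p*lam) * dStirling lam p 0 * dff 1 x 0 := by
        rw [Finset.sum_range_succ' (fun k => (((k:ℝ)) - p*lam) * dStirling lam p k * dff 1 x k) (p+1)]
        push_cast
        ring
      rw [hsec]
      rw [Finset.sum_range_succ (fun k => (((k:ℝ)) - p*lam) * dStirling lam p k * dff 1 x k) (p+1)]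
      rw [stirling_zero lam p (p+1) (by omega)]
      have hfirst : ∀ k ∈ Finset.range (p + 1),
          dStirling lam p k * dff 1 x (k+1)
          = dStirling lam p k * dff 1 x k * (x - k) := by
        intro k _
        rw [dff_succ]
        ring
      rw [Finset.sum_congr rfl hfirst]
      have hcomb : ∑ k ∈ Finset.range (p+1), dStirling lam p k * dff 1 x k * (x - k)
          + (∑ k ∈ Finset.range (p+1), ((k:ℝ) - p*lam) * dStirling lam p k * dff 1 x k)
          = (x - p*lam) * ∑ k ∈ Finset.range (p+1), dStirling lam p k * dff 1 x k := by
        rw [Finset.mul_sum, ← Finset.sum_add_distrib]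
        refine Finset.sum_congr rfl fun k _ => ?_
        ring
      rw [dff_succ lam x p, ← ih x]
      simp only [dStirling_zero_right, dff_zero]
      rcases Nat.eq_zero_or_pos p with hp | hp
      · subst hp
        simp only [dff_zero_arg]
        linear_combination hcomb
      · obtain ⟨q, rfl⟩ : ∃ q, p = q + 1 := ⟨p - 1, by omega⟩
        simp only [dff_zero_arg]
        linear_combination hcomb

lemma hockey (m k : ℕ) :
    ((k:ℝ) + 1) * ∑ n ∈ Finset.range m, dff 1 (n : ℝ) k = dff 1 (m : ℝ) (k+1) := by
  induction m with
  | zero => simp [dff_zero_arg]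
  | succ m ih =>
      rw [Finset.sum_range_succ, mul_add, ih]
      have h1 : dff 1 ((m:ℝ) + 1) (k+1) = ((m:ℝ) + 1) * dff 1 (m : ℝ) k := by
        rw [dff_succ']
        norm_num
      have h2 : dff 1 ((m:ℝ)) (k+1) = dff 1 (m:ℝ) k * ((m:ℝ) - k) := by
        rw [dff_succ]
        norm_num
      push_cast
      rw [h1, h2]
      ring

lemma dff_nat_fact (j : ℕ) : ∀ k : ℕ,
    dff 1 ((j + k : ℕ) : ℝ) k * (j.factorial : ℝ) = ((j + k).factorial : ℝ) := by
  intro k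
  induction k with
  | zero => simp [dff_zero]
  | succ k ih =>
      have hc : ((j + (k+1) : ℕ) : ℝ) = (((j + k : ℕ) : ℝ) + 1) := by push_cast; ring
      have h1 : dff 1 ((j + (k+1) : ℕ) : ℝ) (k+1)
          = (((j + k : ℕ) : ℝ) + 1) * dff 1 ((j + k : ℕ) : ℝ) k := by
        rw [hc, dff_succ']
        norm_num
      rw [h1, mul_assoc, ih]
      have h2 : (j + (k+1)).factorial = (j + k + 1) * (j + k).factorial := by
        rw [show j + (k+1) = (j+k)+1 from by omega, Nat.factorial_succ]
      rw [h2]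
      push_cast
      ring

lemma dff1_nat_zero (k i : ℕ) (hik : i < k + 1) : dff 1 (i : ℝ) (k + 1) = 0 := by
  rw [dff]
  refine Finset.prod_eq_zero (Finset.mem_range.2 hik) ?_
  push_cast
  ring

lemma hasSum_Vk (lam y : ℝ) (hy : |lam * y| < 1) (k : ℕ) :
    HasSum (fun m : ℕ => dff lam 1 m * y ^ m / m.factorial * dff 1 (m : ℝ) (k + 1))
      (y ^ (k + 1) * dff lam 1 (k + 1) * (dexp lam y * ((1 + lam * y) ^ (k + 1))⁻¹)) := by
  have hshift := (hasSum_e_shift lam y hy (k + 1)).mul_left (dff lam 1 (k + 1) * y ^ (k + 1))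
  have hfun : (fun j : ℕ => dff lam 1 (k + 1) * y ^ (k + 1) *
        (dff lam (1 - ((k + 1 : ℕ) : ℝ) * lam) j * y ^ j / j.factorial))
      = fun j : ℕ => dff lam 1 (j + (k + 1)) * y ^ (j + (k + 1)) / (j + (k + 1)).factorial *
          dff 1 ((j + (k + 1) : ℕ) : ℝ) (k + 1) := by
    funext j
    have hadd : dff lam 1 (j + (k + 1)) = dff lam 1 ((k + 1) + j) := by rw [Nat.add_comm]
    rw [hadd, dff_add lam 1 (k + 1) j]
    have hfa := dff_nat_fact j (k + 1)
    have hjf : (j.factorial : ℝ) ≠ 0 := by exact_mod_cast j.factorial_ne_zero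
    have hjkf : ((j + (k + 1)).factorial : ℝ) ≠ 0 := by
      exact_mod_cast (j + (k + 1)).factorial_ne_zero
    have hdf : dff 1 ((j + (k + 1) : ℕ) : ℝ) (k + 1)
        = ((j + (k + 1)).factorial : ℝ) / (j.factorial : ℝ) := by
      rw [← hfa]; field_simp
    rw [hdf, pow_add]
    push_cast
    field_simp
    ring
  rw [hfun] at hshift
  have h2 := (hasSum_nat_add_iff
    (f := fun m : ℕ => dff lam 1 m * y ^ m / m.factorial * dff 1 (m : ℝ) (k + 1)) (k + 1)).1 hshift
  have h0 : ∑ i ∈ Finset.range (k + 1),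
      dff lam 1 i * y ^ i / i.factorial * dff 1 (i : ℝ) (k + 1) = 0 := by
    refine Finset.sum_eq_zero fun i hi => ?_
    rw [dff1_nat_zero k i (Finset.mem_range.1 hi), mul_zero]
  rw [h0, add_zero] at h2
  convert h2 using 1
  · rfl
  ring

end Aux

open Aux Finset

theorem stmt_8 (p : ℕ) (lam y : ℝ) (hy : |lam * y| < 1) :
    HasSum (fun n : ℕ => dff lam n p * dtail lam y n)
      (∑ k ∈ Finset.range (p + 1), dStirling lam p k * (y ^ (k + 1) / (k + 1)) *
        dff lam 1 (k + 1) * (1 + lam * y) ^ (-(k + 1 : ℤ)) * dexp lam y) := by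
  classical
  set c : ℕ → ℝ := fun m => dff lam 1 m * y ^ m / m.factorial with hc
  set F : ℕ × ℕ → ℝ := fun q => if q.1 < q.2 then dff lam q.1 p * c q.2 else 0 with hF
  set l : ℝ := (1 + |lam * y|) / 2 with hldef
  have hl0 : 0 < l := by have := abs_nonneg (lam * y); rw [hldef]; linarith
  have hl1 : l < 1 := by rw [hldef]; linarith
  obtain ⟨C, hC0, hCb⟩ := geom_bound lam y hy
  set A : ℝ := p * (|lam| + 1) with hA
  have hA0 : 0 ≤ A := by positivity
  -- bound on dff lam n p
  have hdffb : ∀ n m : ℕ, n ≤ m → |dff lam (n : ℝ) p| ≤ ((m : ℝ) + A) ^ p := by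
    intro n m hnm
    rw [dff, Finset.abs_prod]
    calc ∏ i ∈ Finset.range p, |(n : ℝ) - i * lam|
        ≤ ∏ i ∈ Finset.range p, ((m : ℝ) + A) := by
          refine Finset.prod_le_prod (fun i _ => abs_nonneg _) fun i hi => ?_
          have hi' : (i : ℝ) ≤ (p : ℝ) := by
            exact_mod_cast le_of_lt (Finset.mem_range.1 hi)
          have h1 : |(n : ℝ) - i * lam| ≤ (n : ℝ) + i * |lam| := by
            calc |(n : ℝ) - i * lam| ≤ |(n : ℝ)| + |(i : ℝ) * lam| := abs_sub _ _
              _ = (n : ℝ) + i * |lam| := by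
                  rw [abs_of_nonneg (Nat.cast_nonneg n), abs_mul,
                    abs_of_nonneg (Nat.cast_nonneg i)]
          have h2 : (n : ℝ) ≤ (m : ℝ) := by exact_mod_cast hnm
          have h3 : (i : ℝ) * |lam| ≤ A := by
            rw [hA]
            nlinarith [abs_nonneg lam, hi']
          linarith
      _ = ((m : ℝ) + A) ^ p := by rw [Finset.prod_const, Finset.card_range]
  -- summability of F
  have habs : Summable fun q : ℕ × ℕ => |F q.swap| := by
    rw [summable_prod_of_nonneg (fun q => abs_nonneg _)]
    constructor
    · intro m
      refine summable_of_ne_finset_zero (s := Finset.range m) fun n hn => ?_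
      have : ¬ n < m := by simpa using hn
      simp [hF, Prod.swap, this]
    · refine Summable.of_nonneg_of_le
        (f := fun m : ℕ => (m : ℝ) * (((m : ℝ) + A) ^ p * (C * l ^ m)))
        (fun m => ?_) (fun m => ?_) ?_
      · exact tsum_nonneg fun n => abs_nonneg _
      · have hts : (∑' n : ℕ, |F ((m, n) : ℕ × ℕ).swap|)
            = ∑ n ∈ Finset.range m, |F (n, m)| := by
          refine tsum_eq_sum fun n hn => ?_
          have : ¬ n < m := by simpa using hn
          simp [hF, Prod.swap, this]
        rw [hts]
        have hbd : ∀ n ∈ Finset.range m, |F (n, m)| ≤ ((m : ℝ) + A) ^ p * (C * l ^ m) := by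
          intro n hn
          have hnm : n < m := Finset.mem_range.1 hn
          have : F (n, m) = dff lam n p * c m := by simp [hF, hnm]
          rw [this, abs_mul]
          have h1 := hdffb n m (le_of_lt hnm)
          have h2 := hCb m
          have h2' : |c m| ≤ C * l ^ m := h2
          exact mul_le_mul h1 h2' (abs_nonneg _) (by positivity)
        calc ∑ n ∈ Finset.range m, |F (n, m)|
            ≤ ∑ n ∈ Finset.range m, ((m : ℝ) + A) ^ p * (C * l ^ m) :=
              Finset.sum_le_sum hbd
          _ = (m : ℝ) * (((m : ℝ) + A) ^ p * (C * l ^ m)) := by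
              rw [Finset.sum_const, Finset.card_range, nsmul_eq_mul]
      · -- summability of majorant
        have hgeo : Summable fun m : ℕ => ((m : ℝ) + 1) ^ (p + 1) * l ^ m := by
          have h1 : Summable fun m : ℕ => ((m : ℝ)) ^ (p + 1) * l ^ m := by
            have := summable_pow_mul_geometric_of_norm_lt_one (R := ℝ) (k := p + 1)
              (r := l) (by rw [Real.norm_eq_abs, abs_of_pos hl0]; exact hl1)
            exact this
          have h2 := (summable_nat_add_iff 1).2 h1
          have h3 := h2.mul_right l⁻¹
          refine h3.congr fun m => ?_
          push_cast
          field_simp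
          ring
        refine Summable.of_nonneg_of_le (fun m => by positivity) (fun m => ?_)
          ((hgeo.mul_left ((A + 1) ^ (p + 1) * C)))
        have hm0 : (0:ℝ) ≤ (m : ℝ) := Nat.cast_nonneg m
        have hb1 : (m : ℝ) * ((m : ℝ) + A) ^ p ≤ ((m : ℝ) + A) ^ (p + 1) := by
          rw [pow_succ]
          have : ((m : ℝ) + A) ^ p * (m : ℝ) ≤ ((m : ℝ) + A) ^ p * ((m : ℝ) + A) := by
            refine mul_le_mul_of_nonneg_left (by linarith) (by positivity)
          linarith [this]
        have hb2 : ((m : ℝ) + A) ^ (p + 1) ≤ ((A + 1) * ((m : ℝ) + 1)) ^ (p + 1) := by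
          refine pow_le_pow_left₀ (by positivity) ?_ _
          nlinarith [hm0, hA0]
        have hlp : (0:ℝ) ≤ l ^ m := by positivity
        calc (m : ℝ) * (((m : ℝ) + A) ^ p * (C * l ^ m))
            = ((m : ℝ) * ((m : ℝ) + A) ^ p) * C * l ^ m := by ring
          _ ≤ ((A + 1) * ((m : ℝ) + 1)) ^ (p + 1) * C * l ^ m := by
              refine mul_le_mul_of_nonneg_right (mul_le_mul_of_nonneg_right ?_ hC0) hlp
              exact le_trans hb1 hb2
          _ = (A + 1) ^ (p + 1) * C * (((m : ℝ) + 1) ^ (p + 1) * l ^ m) := by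
              rw [mul_pow]; ring
  have hFsum : Summable F := by
    have h1 : Summable fun q : ℕ × ℕ => |F q| := by
      have := habs
      rw [← (Equiv.prodComm ℕ ℕ).summable_iff (f := fun q : ℕ × ℕ => |F q|)]
      exact this.congr fun q => rfl
    exact h1.of_abs
  have hT : HasSum F (∑' q : ℕ × ℕ, F q) := hFsum.hasSum
  set T : ℝ := ∑' q : ℕ × ℕ, F q with hTdef
  have hcsum : HasSum c (dexp lam y) := hasSum_dexp lam y hy
  have hfib1 : ∀ n : ℕ, HasSum (fun m => F (n, m)) (dff lam (n : ℝ) p * dtail lam y n) := by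
    intro n
    have h1 : HasSum (fun m : ℕ => if m ≤ n then c m else 0)
        (∑ m ∈ Finset.range (n + 1), c m) := by
      have h0 := hasSum_sum_of_ne_finset_zero (L := SummationFilter.unconditional ℕ) (s := Finset.range (n + 1))
        (f := fun m : ℕ => if m ≤ n then c m else 0)
        (fun m hm => by
          have hmn : ¬ m ≤ n := fun h => hm (Finset.mem_range.2 (Nat.lt_succ_of_le h))
          simp [hmn])
      rwa [Finset.sum_congr rfl
        (fun m hm => if_pos (Nat.lt_succ_iff.1 (Finset.mem_range.1 hm)))] at h0
    have h2 := hcsum.sub h1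
    have h3 : (fun m : ℕ => c m - (if m ≤ n then c m else 0))
        = fun m : ℕ => if n < m then c m else 0 := by
      funext m
      by_cases hmn : m ≤ n
      · simp [hmn, Nat.not_lt.2 hmn]
      · simp [Nat.lt_of_not_le hmn]
    rw [h3] at h2
    have h4 := h2.mul_left (dff lam (n : ℝ) p)
    have h5 : (fun m : ℕ => dff lam (n : ℝ) p * (if n < m then c m else 0))
        = fun m : ℕ => F (n, m) := by
      funext m
      by_cases hnm : n < m
      · simp [hF, hnm]
      · simp [hF, hnm]
    rw [h5] at h4
    have h6 : dtail lam y n = dexp lam y - ∑ m ∈ Finset.range (n + 1), c m := rfl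
    rw [h6]
    exact h4
  have hgsum : HasSum (fun n : ℕ => dff lam (n : ℝ) p * dtail lam y n) T :=
    hT.prod_fiberwise hfib1
  have hTswap : HasSum (fun q : ℕ × ℕ => F q.swap) T :=
    ((Equiv.prodComm ℕ ℕ).hasSum_iff (f := F)).2 hT
  have hfib2 : ∀ m : ℕ, HasSum (fun n => F (n, m))
      (c m * ∑ n ∈ Finset.range m, dff lam (n : ℝ) p) := by
    intro m
    have h1 := hasSum_sum_of_ne_finset_zero (L := SummationFilter.unconditional ℕ) (s := Finset.range m)
      (f := fun n : ℕ => F (n, m)) (fun n hn => by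
        have : ¬ n < m := by simpa using hn
        simp [hF, this])
    have h2 : ∑ n ∈ Finset.range m, F (n, m)
        = c m * ∑ n ∈ Finset.range m, dff lam (n : ℝ) p := by
      rw [Finset.mul_sum]
      refine Finset.sum_congr rfl fun n hn => ?_
      have hnm : n < m := Finset.mem_range.1 hn
      simp only [hF, if_pos hnm]
      ring
    rw [h2] at h1
    exact h1
  have hsum2 : HasSum (fun m : ℕ => c m * ∑ n ∈ Finset.range m, dff lam (n : ℝ) p) T :=
    hTswap.prod_fiberwise hfib2
  have hG : ∀ m : ℕ, (∑ n ∈ Finset.range m, dff lam (n : ℝ) p)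
      = ∑ k ∈ Finset.range (p + 1),
          dStirling lam p k * (dff 1 (m : ℝ) (k + 1) / ((k : ℝ) + 1)) := by
    intro m
    have h1 : ∀ n ∈ Finset.range m, dff lam (n : ℝ) p
        = ∑ k ∈ Finset.range (p + 1), dStirling lam p k * dff 1 (n : ℝ) k :=
      fun n _ => (stirling_expand lam p (n : ℝ)).symm
    rw [Finset.sum_congr rfl h1, Finset.sum_comm]
    refine Finset.sum_congr rfl fun k _ => ?_
    rw [← Finset.mul_sum]
    congr 1
    have hk1 : ((k : ℝ) + 1) ≠ 0 := by positivity
    rw [eq_div_iff hk1, mul_comm]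
    exact hockey m k
  have hfun2 : (fun m : ℕ => c m * ∑ n ∈ Finset.range m, dff lam (n : ℝ) p)
      = fun m : ℕ => ∑ k ∈ Finset.range (p + 1),
          dStirling lam p k * ((k : ℝ) + 1)⁻¹ * (c m * dff 1 (m : ℝ) (k + 1)) := by
    funext m
    rw [hG m, Finset.mul_sum]
    refine Finset.sum_congr rfl fun k _ => ?_
    rw [div_eq_mul_inv]
    ring
  rw [hfun2] at hsum2
  have hVs : ∀ k ∈ Finset.range (p + 1),
      HasSum (fun m : ℕ => dStirling lam p k * ((k : ℝ) + 1)⁻¹ * (c m * dff 1 (m : ℝ) (k + 1)))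
        (dStirling lam p k * ((k : ℝ) + 1)⁻¹ *
          (y ^ (k + 1) * dff lam 1 (k + 1) * (dexp lam y * ((1 + lam * y) ^ (k + 1))⁻¹))) :=
    fun k _ => (hasSum_Vk lam y hy k).mul_left _
  have hsum3 := hasSum_sum hVs
  have hTval : T = ∑ k ∈ Finset.range (p + 1), dStirling lam p k * ((k : ℝ) + 1)⁻¹ *
      (y ^ (k + 1) * dff lam 1 (k + 1) * (dexp lam y * ((1 + lam * y) ^ (k + 1))⁻¹)) :=
    hsum2.unique hsum3
  have hfinal : (∑ k ∈ Finset.range (p + 1), dStirling lam p k * (y ^ (k + 1) / (k + 1)) *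
      dff lam 1 (k + 1) * (1 + lam * y) ^ (-(k + 1 : ℤ)) * dexp lam y) = T := by
    rw [hTval]
    refine Finset.sum_congr rfl fun k _ => ?_
    have hz : (1 + lam * y) ^ (-(k + 1 : ℤ)) = ((1 + lam * y) ^ (k + 1))⁻¹ := by
      rw [zpow_neg, show ((k : ℤ) + 1) = ((k + 1 : ℕ) : ℤ) from by push_cast; ring,
        zpow_natCast]
    rw [hz, div_eq_mul_inv]
    ring
  rw [hfinal]
  exact hgsum
end
end
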